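/- arXiv:1601.04824 — 3 statements merged into one kernel-verified Lean document; each statement's English description precedes it below -/
import Mathlib

section
/- Let (N, Δ, 𝒯, ≤_𝒯, rt, R) be an RSP and let κ = min{𝔱(𝒯), 𝔭(𝒯)}. Then N is (κ,1,Δ)-saturated: every set p(x) of fewer than κ formulas of the form φ(x,ā), with φ(x,ȳ) ∈ Δ and parameters ā from N, which is finitely satisfiable in N, is realized by a single element of N. -/
open FirstOrder Cardinal

namespace Shelah1064

/-! ### Saturation for sets of formulas -/

/-- An instance of a formula `φ(x̄,ȳ)` (with `ȳ` of some finite length `m`) with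
parameters from `N`. -/
abbrev FmlInst (L : Language) (ε : ℕ) (N : Type*) :=
  Σ m : ℕ, L.Formula (Fin ε ⊕ Fin m) × (Fin m → N)

/-- Realization of an instance `φ(x̄, b̄)` at the tuple `x̄`. -/
def RealizesInst {L : Language} {N : Type*} [L.Structure N] {ε : ℕ} (x : Fin ε → N)
    (q : FmlInst L ε N) : Prop :=
  q.2.1.Realize (Sum.elim x q.2.2)

/-- `N` is `(κ, ε, Δ)`-saturated: every set of fewer than `κ` instances of formulas from `Δ`
(in a fixed `ε`-tuple of free variables `x̄`, with parameters from `N`) which is finitely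
satisfiable in `N` is realized in `N`. -/
def TupSaturated {L : Language} (κ : Cardinal) (ε : ℕ)
    (Δ : Set (Σ m : ℕ, L.Formula (Fin ε ⊕ Fin m))) (N : Type*) [L.Structure N] : Prop :=
  ∀ p : Set (FmlInst L ε N),
    (∀ q ∈ p, (⟨q.1, q.2.1⟩ : Σ m : ℕ, L.Formula (Fin ε ⊕ Fin m)) ∈ Δ) →
    #p < κ →
    (∀ s ⊆ p, s.Finite → ∃ x : Fin ε → N, ∀ q ∈ s, RealizesInst x q) →
    ∃ x : Fin ε → N, ∀ q ∈ p, RealizesInst x q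

/-- `(κ, atomically)`-saturated: `(κ,1,Δ)`-saturated where `Δ` is the set of atomic formulas
`φ(x,ȳ)`. -/
def AtomSaturated {L : Language} (κ : Cardinal) (N : Type*) [L.Structure N] : Prop :=
  TupSaturated κ 1 {q : Σ m : ℕ, L.Formula (Fin 1 ⊕ Fin m) | q.2.IsAtomic} N

/-- A (finite) conjunction of atomic formulas. -/
inductive IsConjAtomic {L : Language} {α : Type*} : ∀ {n : ℕ}, L.BoundedFormula α n → Prop
  | of_isAtomic {n} {φ : L.BoundedFormula α n} : φ.IsAtomic → IsConjAtomic φ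
  | inf {n} {φ ψ : L.BoundedFormula α n} :
      IsConjAtomic φ → IsConjAtomic ψ → IsConjAtomic (φ ⊓ ψ)

/-! ### Pre-cuts and the cardinals 𝔱, 𝔭 of a set with a transitive reflexive relation -/

/-- The cofinality of a subset `C` w.r.t. the relation `le`: the least cardinality of a
subset of `C` cofinal in `C`. -/
noncomputable def cofin {T : Type*} (le : T → T → Prop) (C : Set T) : Cardinal :=
  sInf { κ | ∃ S : Set T, S ⊆ C ∧ (∀ a ∈ C, ∃ b ∈ S, le a b) ∧ #S = κ }

/-- `(C₁, C₂)` is a `(κ₁,κ₂)`-pre-cut for the relation `le`. -/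
def IsPreCut {T : Type*} (le : T → T → Prop) (C₁ C₂ : Set T) (κ₁ κ₂ : Cardinal) : Prop :=
  (∀ a ∈ C₁ ∪ C₂, ∀ b ∈ C₁ ∪ C₂, le a b ∨ le b a) ∧
  (∀ a ∈ C₁, ∀ b ∈ C₂, le a b) ∧
  (¬ ∃ c : T, (∀ a ∈ C₁, le a c) ∧ (∀ b ∈ C₂, le c b)) ∧
  cofin le C₁ = κ₁ ∧ cofin (fun a b => le b a) C₂ = κ₂

def HasPreCut {T : Type*} (le : T → T → Prop) (κ₁ κ₂ : Cardinal) : Prop :=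
  ∃ C₁ C₂ : Set T, IsPreCut le C₁ C₂ κ₁ κ₂

/-- `𝔭(𝒯)`: the least `κ₁ + κ₂` over all `(κ₁,κ₂)`-pre-cuts with `κ₁, κ₂` infinite regular. -/
noncomputable def pCard {T : Type*} (le : T → T → Prop) : Cardinal :=
  sInf { κ | ∃ κ₁ κ₂ : Cardinal, κ₁.IsRegular ∧ κ₂.IsRegular ∧
    HasPreCut le κ₁ κ₂ ∧ κ = κ₁ + κ₂ }

/-- `𝔱(𝒯)`: the least infinite `κ` such that some strictly `le`-increasing `κ`-sequence
has no upper bound. -/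
noncomputable def tCard {T : Type*} (le : T → T → Prop) : Cardinal :=
  sInf { κ | ℵ₀ ≤ κ ∧ ∃ f : κ.ord.ToType → T,
    (∀ i j, i < j → le (f i) (f j) ∧ ¬ le (f j) (f i)) ∧ ¬ ∃ ub, ∀ i, le (f i) ub }

/-! ### RSP: realization spectrum problems -/

/-- Realization of `φ(x,ȳ)` at `b` (for the distinguished variable `x`) and `a` (for `ȳ`). -/
def Realize1 {L : Language} {N : Type*} [L.Structure N] {m : ℕ}
    (φ : L.Formula (Fin 1 ⊕ Fin m)) (b : N) (a : Fin m → N) : Prop :=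
  φ.Realize (Sum.elim (fun _ => b) a)

/-- The conjunction `φ₁(x,ȳ₁) ∧ φ₂(x,ȳ₂)` (with the parameter variables placed side by
side). -/
def pConj {L : Language} {m₁ m₂ : ℕ} (φ₁ : L.Formula (Fin 1 ⊕ Fin m₁))
    (φ₂ : L.Formula (Fin 1 ⊕ Fin m₂)) : L.Formula (Fin 1 ⊕ Fin (m₁ + m₂)) :=
  (φ₁.relabel (Sum.map id (Fin.castAdd m₂))) ⊓ (φ₂.relabel (Sum.map id (Fin.natAdd m₁)))

/-- `(N, Δ, 𝒯, ≤_𝒯, rt, R)` is an RSP (realization spectrum problem). -/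
structure IsRSP {L : Language} (N : Type*) [L.Structure N]
    (Δ : Set (Σ m : ℕ, L.Formula (Fin 1 ⊕ Fin m)))
    {T : Type*} (le : T → T → Prop) (rt : T) (R : N → T → Prop) : Prop where
  refl : ∀ t, le t t
  trans : ∀ s t u, le s t → le t u → le s u
  root_le : ∀ t, le rt t
  conj_closed : ∀ q₁ ∈ Δ, ∀ q₂ ∈ Δ,
    (⟨q₁.1 + q₂.1, pConj q₁.2 q₂.2⟩ : Σ m : ℕ, L.Formula (Fin 1 ⊕ Fin m)) ∈ Δ
  root_R : ∀ b, R b rt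
  mono : ∀ s t, le s t → ∀ b, R b t → R b s
  r_nonempty : ∀ t, ∃ b, R b t
  clause_i : ∀ s, ∀ q ∈ Δ, ∀ a : Fin q.1 → N,
    (∃ b, R b s ∧ Realize1 q.2 b a) →
    ∃ t, le s t ∧ ∀ b, (R b t ↔ R b s ∧ Realize1 q.2 b a)
  clause_j : ∀ t, ∀ q ∈ Δ, ∀ a : Fin q.1 → N,
    (∃ b, Realize1 q.2 b a) →
    ∃ s, le s t ∧ (∃ b, R b s ∧ Realize1 q.2 b a) ∧
      ∀ s₁, le s₁ t → (∃ b, R b s₁ ∧ Realize1 q.2 b a) → le s₁ s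

section OrderLemmas

variable {T : Type} {le : T → T → Prop}

lemma cofin_le_mk (hrefl : ∀ t, le t t) (C : Set T) : cofin le C ≤ #C :=
  csInf_le' (show #C ∈ { κ | ∃ S : Set T, S ⊆ C ∧ (∀ a ∈ C, ∃ b ∈ S, le a b) ∧ #S = κ } from
    ⟨C, subset_rfl, fun a ha => ⟨a, ha, hrefl a⟩, rfl⟩)

lemma exists_cofinal_eq (hrefl : ∀ t, le t t) (C : Set T) :
    ∃ S : Set T, S ⊆ C ∧ (∀ a ∈ C, ∃ b ∈ S, le a b) ∧ #S = cofin le C :=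
  csInf_mem (s := { κ | ∃ S : Set T, S ⊆ C ∧ (∀ a ∈ C, ∃ b ∈ S, le a b) ∧ #S = κ })
    ⟨#C, C, subset_rfl, fun a ha => ⟨a, ha, hrefl a⟩, rfl⟩

lemma lt_cofin_not_cofinal {C S : Set T} (hS : S ⊆ C) (h : #S < cofin le C) :
    ∃ a ∈ C, ∀ b ∈ S, ¬ le a b := by
  by_contra h'
  push_neg at h'
  exact absurd (csInf_le' (show #S ∈ { κ | ∃ S : Set T, S ⊆ C ∧ (∀ a ∈ C, ∃ b ∈ S, le a b) ∧ #S = κ } from ⟨S, hS, h', rfl⟩)) (not_le.2 h)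

lemma finset_exists_max (htrans : ∀ a b c, le a b → le b c → le a c)
    (s : Finset T) (hne : s.Nonempty)
    (hlin : ∀ a ∈ s, ∀ b ∈ s, le a b ∨ le b a) :
    ∃ m ∈ s, ∀ a ∈ s, le a m := by
  classical
  induction s using Finset.induction with
  | empty => simp at hne
  | @insert x s hx ih =>
    by_cases hs : s.Nonempty
    · obtain ⟨m, hm, hmax⟩ := ih hs (fun a ha b hb =>
        hlin a (Finset.mem_insert_of_mem ha) b (Finset.mem_insert_of_mem hb))
      rcases hlin x (Finset.mem_insert_self _ _) m (Finset.mem_insert_of_mem hm) with h | h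
      · refine ⟨m, Finset.mem_insert_of_mem hm, fun a ha => ?_⟩
        rcases Finset.mem_insert.1 ha with rfl | ha
        · exact h
        · exact hmax a ha
      · refine ⟨x, Finset.mem_insert_self _ _, fun a ha => ?_⟩
        rcases Finset.mem_insert.1 ha with rfl | ha
        · rcases hlin a (Finset.mem_insert_self _ _) a (Finset.mem_insert_self _ _) with h' | h' <;>
            exact h'
        · exact htrans _ _ _ (hmax a ha) h
    · rw [Finset.not_nonempty_iff_eq_empty] at hs
      subst hs
      refine ⟨x, Finset.mem_insert_self _ _, fun a ha => ?_⟩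
      rcases Finset.mem_insert.1 ha with rfl | ha
      · rcases hlin a (Finset.mem_insert_self _ _) a (Finset.mem_insert_self _ _) with h' | h' <;>
          exact h'
      · simp at ha

/-- CORE: a strictly increasing cofinal sequence of length `cofin le C` in a linearly
preordered set with no maximum. -/
lemma core (hrefl : ∀ t, le t t) (htrans : ∀ a b c, le a b → le b c → le a c)
    {C : Set T} (hlin : ∀ a ∈ C, ∀ b ∈ C, le a b ∨ le b a)
    (hne : C.Nonempty) (hnomax : ¬ ∃ m ∈ C, ∀ a ∈ C, le a m) :
    ℵ₀ ≤ cofin le C ∧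
    ∃ f : (cofin le C).ord.ToType → T, (∀ i, f i ∈ C) ∧
      (∀ i j, i < j → le (f i) (f j) ∧ ¬ le (f j) (f i)) ∧
      (∀ a ∈ C, ∃ i, le a (f i)) := by
  classical
  obtain ⟨S, hSC, hScof, hSk⟩ := exists_cofinal_eq hrefl C
  set κ := cofin le C with hκ
  have hSne : S.Nonempty := by
    obtain ⟨a, ha⟩ := hne
    obtain ⟨b, hb, -⟩ := hScof a ha
    exact ⟨b, hb⟩
  have hκinf : ℵ₀ ≤ κ := by
    by_contra h
    rw [not_le, ← hSk, Cardinal.lt_aleph0_iff_set_finite] at h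
    obtain ⟨m, hm, hmax⟩ := finset_exists_max htrans h.toFinset
      (by simpa [Set.Finite.toFinset_nonempty] using hSne)
      (fun a ha b hb => hlin a (hSC (h.mem_toFinset.1 ha)) b (hSC (h.mem_toFinset.1 hb)))
    refine hnomax ⟨m, hSC (h.mem_toFinset.1 hm), fun a ha => ?_⟩
    obtain ⟨b, hb, hab⟩ := hScof a ha
    exact htrans _ _ _ hab (hmax b (h.mem_toFinset.2 hb))
  refine ⟨hκinf, ?_⟩
  have hmkι : #κ.ord.ToType = κ := Cardinal.mk_ord_toType κ
  obtain ⟨e⟩ : Nonempty (κ.ord.ToType ≃ S) := Cardinal.eq.1 (by rw [hmkι, hSk])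
  -- key step
  have key : ∀ D : Set T, D ⊆ C → #D < κ → ∀ c ∈ C,
      ∃ a ∈ C, le c a ∧ ∀ b ∈ D, le b a ∧ ¬ le a b := by
    intro D hD hDκ c hc
    have h1 : #(insert c D : Set T) < κ := by
      apply lt_of_le_of_lt Cardinal.mk_insert_le
      exact Cardinal.add_lt_of_lt hκinf hDκ (Cardinal.one_lt_aleph0.trans_le hκinf)
    obtain ⟨a, ha, hab⟩ := lt_cofin_not_cofinal (le := le)
      (Set.insert_subset hc hD) (hκ ▸ h1)
    have hlc : ∀ b ∈ insert c D, le b a ∧ ¬ le a b := fun b hb => by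
      have := hab b hb
      rcases hlin a ha b (Set.insert_subset hc hD hb) with h' | h'
      · exact absurd h' this
      · exact ⟨h', this⟩
    exact ⟨a, ha, (hlc c (Set.mem_insert _ _)).1, fun b hb => hlc b (Set.mem_insert_of_mem _ hb)⟩
  have key' : ∀ D : Set T, D ⊆ C → #D < κ → ∀ i : κ.ord.ToType,
      ∃ a, a ∈ C ∧ le ↑(e i) a ∧ ∀ b ∈ D, le b a ∧ ¬ le a b := by
    intro D h1 h2 i
    obtain ⟨a, ha, h3, h4⟩ := key D h1 h2 ↑(e i) (hSC (e i).2)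
    exact ⟨a, ha, h3, h4⟩
  choose pick hpC hple hpdom using key'
  have hseg : ∀ i : κ.ord.ToType, #{j : κ.ord.ToType // j < i} < κ := fun i =>
    Cardinal.mk_Iio_ord_toType i
  have wf : WellFounded ((· < ·) : κ.ord.ToType → κ.ord.ToType → Prop) := wellFounded_lt
  set D : (i : κ.ord.ToType) → ((j : κ.ord.ToType) → j < i → ↥C) → Set T :=
    fun i rec => Set.range (fun j : {j : κ.ord.ToType // j < i} => ((rec j.1 j.2 : ↥C) : T))
    with hD
  have hDsub : ∀ i rec, D i rec ⊆ C := by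
    rintro i rec x ⟨j, rfl⟩
    exact (rec j.1 j.2).2
  have hDlt : ∀ i rec, #(D i rec) < κ :=
    fun i rec => lt_of_le_of_lt Cardinal.mk_range_le (hseg i)
  set F : (i : κ.ord.ToType) → ((j : κ.ord.ToType) → j < i → ↥C) → ↥C :=
    fun i rec => ⟨pick (D i rec) (hDsub i rec) (hDlt i rec) i,
      hpC (D i rec) (hDsub i rec) (hDlt i rec) i⟩ with hF
  set g : κ.ord.ToType → ↥C := wf.fix F with hg
  have hgeq : ∀ i, g i = F i (fun j _ => g j) := fun i => wf.fix_eq F i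
  have hg1 : ∀ i, le ↑(e i) ↑(g i) := by
    intro i
    rw [hgeq i]
    exact hple _ _ _ i
  have hg2 : ∀ i j, i < j → le ((g i : ↥C) : T) ↑(g j) ∧ ¬ le ↑(g j) ↑(g i) := by
    intro i j hij
    have hmem : ((g i : ↥C) : T) ∈ D j (fun j _ => g j) := ⟨⟨i, hij⟩, rfl⟩
    have h5 := hpdom (D j (fun j' _ => g j')) (hDsub j (fun j' _ => g j')) (hDlt j (fun j' _ => g j')) j ↑(g i) hmem
    rw [hgeq j]
    exact h5
  refine ⟨fun i => ↑(g i), fun i => (g i).2, hg2, fun a ha => ?_⟩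
  obtain ⟨b, hb, hab⟩ := hScof a ha
  refine ⟨e.symm ⟨b, hb⟩, htrans _ _ _ hab ?_⟩
  have h6 := hg1 (e.symm ⟨b, hb⟩)
  rwa [Equiv.apply_symm_apply] at h6

lemma cofin_isRegular (hrefl : ∀ t, le t t) (htrans : ∀ a b c, le a b → le b c → le a c)
    {C : Set T} (hlin : ∀ a ∈ C, ∀ b ∈ C, le a b ∨ le b a)
    (hne : C.Nonempty) (hnomax : ¬ ∃ m ∈ C, ∀ a ∈ C, le a m) :
    (cofin le C).IsRegular := by
  set κ := cofin le C with hκ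
  obtain ⟨hκinf, f, hfC, hfmono, hfcof⟩ := core hrefl htrans hlin hne hnomax
  refine ⟨hκinf, ?_⟩
  haveI : IsWellOrder κ.ord.ToType ((· < ·) : κ.ord.ToType → κ.ord.ToType → Prop) :=
    isWellOrder_lt
  obtain ⟨S', hUnb', hS'⟩ := Order.exists_cof_eq κ.ord.ToType
  have hUnb : ∀ i, ∃ s ∈ S', ¬ s < i := fun i =>
    let ⟨s, hs, h⟩ := hUnb' i; ⟨s, hs, not_lt.2 h⟩
  rw [Ordinal.cof_toType] at hS'
  have hcof : ∀ a ∈ C, ∃ b ∈ f '' S', le a b := by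
    intro a ha
    obtain ⟨i, hi⟩ := hfcof a ha
    obtain ⟨s, hs, hsi⟩ := hUnb i
    rcases eq_or_lt_of_le (not_lt.1 hsi) with h | h
    · exact ⟨f s, ⟨s, hs, rfl⟩, h ▸ hi⟩
    · exact ⟨f s, ⟨s, hs, rfl⟩, htrans _ _ _ hi (hfmono i s h).1⟩
  have h1 : κ ≤ #(f '' S') :=
    csInf_le' (show #(f '' S') ∈
      { κ | ∃ S : Set T, S ⊆ C ∧ (∀ a ∈ C, ∃ b ∈ S, le a b) ∧ #S = κ } from
      ⟨f '' S', by rintro x ⟨i, -, rfl⟩; exact hfC i, hcof, rfl⟩)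
  calc κ ≤ #(f '' S') := h1
    _ ≤ #S' := Cardinal.mk_image_le
    _ = κ.ord.cof := hS'

lemma exists_ub_of_lt_tCard (hrefl : ∀ t, le t t) (htrans : ∀ a b c, le a b → le b c → le a c)
    {C : Set T} (hlin : ∀ a ∈ C, ∀ b ∈ C, le a b ∨ le b a)
    (hne : C.Nonempty) (hcard : #C < tCard le) :
    ∃ ub, ∀ a ∈ C, le a ub := by
  by_contra h
  have hnomax : ¬ ∃ m ∈ C, ∀ a ∈ C, le a m := by
    rintro ⟨m, -, hm⟩
    exact h ⟨m, hm⟩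
  obtain ⟨hκinf, f, hfC, hfmono, hfcof⟩ := core hrefl htrans hlin hne hnomax
  have hmem : cofin le C ∈ { κ | ℵ₀ ≤ κ ∧ ∃ f : κ.ord.ToType → T,
      (∀ i j, i < j → le (f i) (f j) ∧ ¬ le (f j) (f i)) ∧ ¬ ∃ ub, ∀ i, le (f i) ub } := by
    refine ⟨hκinf, f, hfmono, ?_⟩
    rintro ⟨ub, hub⟩
    refine h ⟨ub, fun a ha => ?_⟩
    obtain ⟨i, hi⟩ := hfcof a ha
    exact htrans _ _ _ hi (hub i)
  exact absurd (le_trans (csInf_le' hmem) (cofin_le_mk hrefl C)) (not_le.2 hcard)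

end OrderLemmas


/-! ### Formula machinery -/

section Formulas

variable {L : FirstOrder.Language.{0, 0}} {N : Type} [L.Structure N]

/-- Realization of an instance at `b`. -/
def Rea (b : N) (q : FmlInst L 1 N) : Prop := Realize1 q.2.1 b q.2.2

lemma realize1_pConj {m₁ m₂ : ℕ} (φ₁ : L.Formula (Fin 1 ⊕ Fin m₁))
    (φ₂ : L.Formula (Fin 1 ⊕ Fin m₂)) (b : N) (a : Fin (m₁ + m₂) → N) :
    Realize1 (pConj φ₁ φ₂) b a ↔
      Realize1 φ₁ b (a ∘ Fin.castAdd m₂) ∧ Realize1 φ₂ b (a ∘ Fin.natAdd m₁) := by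
  have e1 : Sum.elim (fun _ : Fin 1 => b) a ∘ Sum.map id (Fin.castAdd m₂) =
      Sum.elim (fun _ : Fin 1 => b) (a ∘ Fin.castAdd m₂) := by
    funext x; cases x <;> rfl
  have e2 : Sum.elim (fun _ : Fin 1 => b) a ∘ Sum.map id (Fin.natAdd m₁) =
      Sum.elim (fun _ : Fin 1 => b) (a ∘ Fin.natAdd m₁) := by
    funext x; cases x <;> rfl
  unfold Realize1 pConj
  rw [Language.Formula.realize_inf, Language.Formula.realize_relabel,
    Language.Formula.realize_relabel, e1, e2]

/-- Conjunction of two instances. -/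
def instConj (q₁ q₂ : FmlInst L 1 N) : FmlInst L 1 N :=
  ⟨q₁.1 + q₂.1, pConj q₁.2.1 q₂.2.1, Fin.append q₁.2.2 q₂.2.2⟩

lemma rea_instConj (q₁ q₂ : FmlInst L 1 N) (b : N) :
    Rea b (instConj q₁ q₂) ↔ Rea b q₁ ∧ Rea b q₂ := by
  have e1 : (Fin.append q₁.2.2 q₂.2.2) ∘ Fin.castAdd q₂.1 = q₁.2.2 := by
    funext x; simp [Fin.append_left]
  have e2 : (Fin.append q₁.2.2 q₂.2.2) ∘ Fin.natAdd q₁.1 = q₂.2.2 := by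
    funext x; simp [Fin.append_right]
  show Realize1 (pConj q₁.2.1 q₂.2.1) b (Fin.append q₁.2.2 q₂.2.2) ↔ _
  rw [realize1_pConj, e1, e2]; rfl

/-- Conjunction of an instance and a list of instances. -/
def listConj (q : FmlInst L 1 N) : List (FmlInst L 1 N) → FmlInst L 1 N
  | [] => q
  | r :: l => listConj (instConj q r) l

lemma listConj_mem {Δ : Set (Σ m : ℕ, L.Formula (Fin 1 ⊕ Fin m))}
    (hΔ : ∀ q₁ ∈ Δ, ∀ q₂ ∈ Δ,
      (⟨q₁.1 + q₂.1, pConj q₁.2 q₂.2⟩ : Σ m : ℕ, L.Formula (Fin 1 ⊕ Fin m)) ∈ Δ) :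
    ∀ (l : List (FmlInst L 1 N)) (q : FmlInst L 1 N),
      (⟨q.1, q.2.1⟩ : Σ m : ℕ, L.Formula (Fin 1 ⊕ Fin m)) ∈ Δ →
      (∀ r ∈ l, (⟨r.1, r.2.1⟩ : Σ m : ℕ, L.Formula (Fin 1 ⊕ Fin m)) ∈ Δ) →
      (⟨(listConj q l).1, (listConj q l).2.1⟩ : Σ m : ℕ, L.Formula (Fin 1 ⊕ Fin m)) ∈ Δ := by
  intro l
  induction l with
  | nil => exact fun q hq _ => hq
  | cons r l ih =>
    intro q hq hl
    exact ih (instConj q r)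
      (hΔ ⟨q.1, q.2.1⟩ hq ⟨r.1, r.2.1⟩ (hl r (List.mem_cons_self)))
      (fun r' hr' => hl r' (List.mem_cons_of_mem r hr'))

lemma rea_listConj (b : N) :
    ∀ (l : List (FmlInst L 1 N)) (q : FmlInst L 1 N),
      Rea b (listConj q l) ↔ Rea b q ∧ ∀ r ∈ l, Rea b r := by
  intro l
  induction l with
  | nil => simp [listConj]
  | cons r l ih =>
    intro q
    rw [listConj, ih, rea_instConj]
    constructor
    · rintro ⟨⟨h1, h2⟩, h3⟩
      refine ⟨h1, fun r' hr' => ?_⟩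
      rcases List.mem_cons.1 hr' with rfl | hr'
      · exact h2
      · exact h3 r' hr'
    · rintro ⟨h1, h2⟩
      exact ⟨⟨h1, h2 r (List.mem_cons_self)⟩, fun r' hr' => h2 r' (List.mem_cons_of_mem r hr')⟩

end Formulas

/-! ### RSP machinery -/

section RSPLemmas

variable {L : FirstOrder.Language.{0, 0}} {N : Type} [L.Structure N]
  {Δ : Set (Σ m : ℕ, L.Formula (Fin 1 ⊕ Fin m))}
  {T : Type} {le : T → T → Prop} {rt : T} {R : N → T → Prop}

/-- `Sat R s l`: some element of `R_s` realizes all instances in `l`. -/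
def Sat (R : N → T → Prop) (s : T) (l : List (FmlInst L 1 N)) : Prop :=
  ∃ b, R b s ∧ ∀ r ∈ l, Rea b r

/-- `GoodFor R s I`: every finite subset of `I` is realized by an element of `R_s`. -/
def GoodFor (R : N → T → Prop) (s : T) (I : Set (FmlInst L 1 N)) : Prop :=
  ∀ l : List (FmlInst L 1 N), (∀ r ∈ l, r ∈ I) → Sat R s l

lemma clauseJ_list (hrsp : IsRSP N Δ le rt R) {l : List (FmlInst L 1 N)}
    (hΔl : ∀ r ∈ l, (⟨r.1, r.2.1⟩ : Σ m : ℕ, L.Formula (Fin 1 ⊕ Fin m)) ∈ Δ)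
    (hsat : ∃ b, ∀ r ∈ l, Rea b r) (t : T) :
    ∃ s, le s t ∧ Sat R s l ∧ ∀ s₁, le s₁ t → Sat R s₁ l → le s₁ s := by
  cases l with
  | nil =>
    obtain ⟨b, hb⟩ := hrsp.r_nonempty t
    exact ⟨t, hrsp.refl t, ⟨b, hb, by simp⟩, fun s₁ h _ => h⟩
  | cons r l' =>
    set Q := listConj r l' with hQ
    have hQΔ : (⟨Q.1, Q.2.1⟩ : Σ m : ℕ, L.Formula (Fin 1 ⊕ Fin m)) ∈ Δ :=
      listConj_mem hrsp.conj_closed l' r (hΔl r (List.mem_cons_self))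
        (fun r' hr' => hΔl r' (List.mem_cons_of_mem r hr'))
    have hrea : ∀ b : N, Rea b Q ↔ ∀ r' ∈ r :: l', Rea b r' := by
      intro b
      rw [hQ, rea_listConj]
      constructor
      · rintro ⟨h1, h2⟩ r' hr'
        rcases List.mem_cons.1 hr' with rfl | hr'
        · exact h1
        · exact h2 r' hr'
      · intro h
        exact ⟨h r (List.mem_cons_self), fun r' hr' => h r' (List.mem_cons_of_mem r hr')⟩
    obtain ⟨b, hb⟩ := hsat
    obtain ⟨s, h1, h2, h3⟩ := hrsp.clause_j t ⟨Q.1, Q.2.1⟩ hQΔ Q.2.2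
      ⟨b, (hrea b).2 hb⟩
    refine ⟨s, h1, ?_, ?_⟩
    · obtain ⟨b', hb1, hb2⟩ := h2
      exact ⟨b', hb1, (hrea b').1 hb2⟩
    · rintro s₁ hs₁ ⟨b', hb1, hb2⟩
      exact h3 s₁ hs₁ ⟨b', hb1, (hrea b').2 hb2⟩

end RSPLemmas


/-! ### The crux lemma -/

section Crux

variable {L : FirstOrder.Language.{0, 0}} {N : Type} [L.Structure N]
  {Δ : Set (Σ m : ℕ, L.Formula (Fin 1 ⊕ Fin m))}
  {T : Type} {le : T → T → Prop} {rt : T} {R : N → T → Prop}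

lemma crux (hrsp : IsRSP N Δ le rt R) {p : Set (FmlInst L 1 N)}
    (hpΔ : ∀ q ∈ p, (⟨q.1, q.2.1⟩ : Σ m : ℕ, L.Formula (Fin 1 ⊕ Fin m)) ∈ Δ)
    (hfin : ∀ l : List (FmlInst L 1 N), (∀ r ∈ l, r ∈ p) → ∃ b, ∀ r ∈ l, Rea b r)
    (hpinf : ℵ₀ ≤ #p) (ht : #p < tCard le) (hp : #p < pCard le)
    {C : Set T} (hCne : C.Nonempty)
    (hlin : ∀ a ∈ C, ∀ b ∈ C, le a b ∨ le b a)
    (hCcard : #C ≤ #p)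
    {I : Set (FmlInst L 1 N)} (hI : I ⊆ p)
    (hgood : ∀ a ∈ C, GoodFor R a I) :
    ∃ s, (∀ a ∈ C, le a s) ∧ GoodFor R s I := by
  classical
  by_contra hbad
  push_neg at hbad
  -- the one-step construction
  have step_ex : ∀ c : T, (∀ a ∈ C, le a c) →
      ∃ x, ∃ l : List (FmlInst L 1 N), (∀ r ∈ l, r ∈ I) ∧ ¬ Sat R c l ∧ le x c ∧
        Sat R x l ∧ (∀ s₁, le s₁ c → Sat R s₁ l → le s₁ x) ∧ ∀ a ∈ C, le a x := by
    intro c hc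
    have hbadc : ¬ GoodFor R c I := hbad c hc
    rw [GoodFor] at hbadc
    push_neg at hbadc
    obtain ⟨l, hlI, hlsat⟩ := hbadc
    obtain ⟨x, h1, h2, h3⟩ := clauseJ_list hrsp
      (fun r hr => hpΔ r (hI (hlI r hr))) (hfin l (fun r hr => hI (hlI r hr))) c
    refine ⟨x, l, hlI, hlsat, h1, h2, h3, fun a ha => ?_⟩
    exact h3 a (hc a ha) (hgood a ha l hlI)
  -- transfinite recursion
  set ι := (Order.succ (#p)).ord.ToType with hι
  haveI : Nonempty ι := by
    rw [hι, Ordinal.toType_nonempty_iff_ne_zero, ne_eq, Cardinal.ord_eq_zero]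
    exact ne_of_gt (lt_of_le_of_lt zero_le (Order.lt_succ (#p)))
  have wf : WellFounded ((· < ·) : ι → ι → Prop) := wellFounded_lt
  set F : ι → T := wf.fix (fun i rec =>
    if h : ∃ c, (∀ a ∈ C, le a c) ∧ ∀ j (hj : j < i), le c (rec j hj) then
      Classical.choose (step_ex (Classical.choose h) (Classical.choose_spec h).1)
    else rt) with hF
  set Filler : ι → Prop := fun i =>
    ∃ c, (∀ a ∈ C, le a c) ∧ ∀ j (hj : j < i), le c (F j) with hFiller
  have props : ∀ i, Filler i → ∃ c, ∃ l : List (FmlInst L 1 N),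
      (∀ a ∈ C, le a c) ∧ (∀ j, j < i → le c (F j)) ∧ (∀ r ∈ l, r ∈ I) ∧ ¬ Sat R c l ∧
      le (F i) c ∧ Sat R (F i) l ∧ (∀ s₁, le s₁ c → Sat R s₁ l → le s₁ (F i)) ∧
      ∀ a ∈ C, le a (F i) := by
    intro i hi
    have e0 : F i = if h : ∃ c, (∀ a ∈ C, le a c) ∧ ∀ j (hj : j < i), le c (F j) then
        Classical.choose (step_ex (Classical.choose h) (Classical.choose_spec h).1)
      else rt := wf.fix_eq _ i
    have e : F i = Classical.choose
        (step_ex (Classical.choose hi) (Classical.choose_spec hi).1) := by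
      rw [e0]
      exact dif_pos hi
    obtain ⟨l, h1, h2, h3, h4, h5, h6⟩ := Classical.choose_spec
      (step_ex (Classical.choose hi) (Classical.choose_spec hi).1)
    rw [← e] at h3 h4 h5 h6
    exact ⟨Classical.choose hi, l, (Classical.choose_spec hi).1,
      fun j hj => (Classical.choose_spec hi).2 j hj, h1, h2, h3, h4, h5, h6⟩
  choose cF lF hc1 hc2 hl1 hl2 hl3 hl4 hl5 hl6 using props
  -- basic properties of the chain
  have down : ∀ i j (hi : Filler i) (hj : Filler j), i < j → le (F j) (F i) :=
    fun i j hi hj hij => hrsp.trans _ _ _ (hl3 j hj) (hc2 j hj i hij)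
  have winj : ∀ i j (hi : Filler i) (hj : Filler j), i < j → lF i hi ≠ lF j hj := by
    intro i j hi hj hij heq
    obtain ⟨b, hb1, hb2⟩ := hl4 i hi
    refine hl2 j hj ⟨b, ?_, ?_⟩
    · exact hrsp.mono _ _ (hc2 j hj i hij) b hb1
    · rw [← heq]; exact hb2
  -- the minimal element is a filler stage
  have hne' : (Set.univ : Set ι).Nonempty := by
    refine ⟨Classical.arbitrary ι, trivial⟩
  have i0 := wf.min Set.univ hne'
  have hub0 : ∃ ub, ∀ a ∈ C, le a ub :=
    exists_ub_of_lt_tCard hrsp.refl hrsp.trans hlin hCne (lt_of_le_of_lt hCcard ht)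
  have hFillermin : ∀ i : ι, (∀ j : ι, ¬ j < i) → Filler i := by
    intro i hmin
    obtain ⟨ub, hub⟩ := hub0
    exact ⟨ub, hub, fun j hj => absurd hj (hmin j)⟩
  -- cardinality bound on filler stages
  have hlists : #{l : List (FmlInst L 1 N) // ∀ r ∈ l, r ∈ I} ≤ #p := by
    haveI : Infinite ↥p := Cardinal.infinite_iff.2 hpinf
    have key : ∀ x : {l : List (FmlInst L 1 N) // ∀ r ∈ l, r ∈ I},
        ((fun x : {l : List (FmlInst L 1 N) // ∀ r ∈ l, r ∈ I} =>
          x.1.attach.map (fun y => (⟨y.1, hI (x.2 y.1 y.2)⟩ : ↥p))) x).map Subtype.val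
          = x.1 := by
      intro x
      rw [List.map_map]
      have e : (Subtype.val ∘ fun y : {r // r ∈ x.1} => (⟨y.1, hI (x.2 y.1 y.2)⟩ : ↥p)) =
          fun y : {r // r ∈ x.1} => (y : FmlInst L 1 N) := rfl
      rw [e]
      exact List.attach_map_subtype_val x.1
    have hmap : Function.Injective
        (fun x : {l : List (FmlInst L 1 N) // ∀ r ∈ l, r ∈ I} =>
          x.1.attach.map (fun y => (⟨y.1, hI (x.2 y.1 y.2)⟩ : ↥p))) := by
      intro x y hxy
      apply Subtype.ext
      rw [← key x, hxy, key y]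
    calc #{l : List (FmlInst L 1 N) // ∀ r ∈ l, r ∈ I} ≤ #(List ↥p) :=
          Cardinal.mk_le_of_injective hmap
      _ = #↥p := Cardinal.mk_list_eq_mk ↥p
  -- not every stage is a filler stage
  have hnotall : ¬ ∀ i, Filler i := by
    intro hall
    have hinj : Function.Injective
        (fun i : ι => (⟨lF i (hall i), hl1 i (hall i)⟩ :
          {l : List (FmlInst L 1 N) // ∀ r ∈ l, r ∈ I})) := by
      intro i j hij
      rcases lt_trichotomy i j with h | h | h
      · exact absurd (congrArg Subtype.val hij) (winj i j (hall i) (hall j) h)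
      · exact h
      · exact absurd (congrArg Subtype.val hij).symm (winj j i (hall j) (hall i) h)
    have : #ι ≤ #p := le_trans (Cardinal.mk_le_of_injective hinj) hlists
    rw [hι, Cardinal.mk_ord_toType] at this
    exact absurd this (not_le.2 (Order.lt_succ (#p)))
  -- the least non-filler stage
  push_neg at hnotall
  have hWne : {i : ι | ¬ Filler i}.Nonempty := hnotall
  set istar := wf.min {i : ι | ¬ Filler i} hWne with histar
  have hnostar : ¬ Filler istar := wf.min_mem _ hWne
  have hbelow : ∀ j, j < istar → Filler j := by
    intro j hj
    by_contra hjf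
    exact wf.not_lt_min _ hjf hj
  have hbelow_ne : ∃ j, j < istar := by
    by_contra hmin
    push_neg at hmin
    exact hnostar (hFillermin istar (fun j => not_lt.2 (hmin j)))
  obtain ⟨j₀, hj₀⟩ := hbelow_ne
  -- the second side of the pre-cut
  set C₂ : Set T := F '' {j | j < istar} with hC₂
  have hcross : ∀ a ∈ C, ∀ b ∈ C₂, le a b := by
    rintro a ha b ⟨j, hj, rfl⟩
    exact hl6 j (hbelow j hj) a ha
  have hC₂lin : ∀ a ∈ C₂, ∀ b ∈ C₂, le a b ∨ le b a := by
    rintro a ⟨j, hj, rfl⟩ b ⟨k, hk, rfl⟩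
    rcases lt_trichotomy j k with h | rfl | h
    · exact Or.inr (down j k (hbelow j hj) (hbelow k hk) h)
    · exact Or.inl (hrsp.refl _)
    · exact Or.inl (down k j (hbelow k hk) (hbelow j hj) h)
  have hnofiller : ¬ ∃ c, (∀ a ∈ C, le a c) ∧ ∀ b ∈ C₂, le c b := by
    rintro ⟨c, h1, h2⟩
    exact hnostar ⟨c, h1, fun j hj => h2 (F j) ⟨j, hj, rfl⟩⟩
  have hnoCmax : ¬ ∃ m ∈ C, ∀ a ∈ C, le a m := by
    rintro ⟨m, hm, hmax⟩
    exact hnofiller ⟨m, hmax, fun b hb => hcross m hm b hb⟩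
  have hnoC₂min : ¬ ∃ m ∈ C₂, ∀ a ∈ C₂, (fun a b => le b a) a m := by
    rintro ⟨m, hm, hmax⟩
    obtain ⟨j, hj, rfl⟩ := hm
    exact hnofiller ⟨F j, hl6 j (hbelow j hj), fun b hb => hmax b hb⟩
  have hC₂ne : C₂.Nonempty := ⟨F j₀, j₀, hj₀, rfl⟩
  -- the pre-cut
  have hreg1 : (cofin le C).IsRegular :=
    cofin_isRegular hrsp.refl hrsp.trans hlin hCne hnoCmax
  have hreg2 : (cofin (fun a b => le b a) C₂).IsRegular :=
    cofin_isRegular (le := fun a b => le b a) hrsp.refl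
      (fun a b c h1 h2 => hrsp.trans c b a h2 h1)
      (fun a ha b hb => (hC₂lin a ha b hb).symm) hC₂ne hnoC₂min
  have hprecut : IsPreCut le C C₂ (cofin le C) (cofin (fun a b => le b a) C₂) := by
    refine ⟨?_, hcross, hnofiller, rfl, rfl⟩
    rintro a (ha | ha) b (hb | hb)
    · exact hlin a ha b hb
    · exact Or.inl (hcross a ha b hb)
    · exact Or.inr (hcross b hb a ha)
    · exact hC₂lin a ha b hb
  have hpCard_le : pCard le ≤ cofin le C + cofin (fun a b => le b a) C₂ :=
    csInf_le' (show _ ∈ { κ | ∃ κ₁ κ₂ : Cardinal, κ₁.IsRegular ∧ κ₂.IsRegular ∧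
      HasPreCut le κ₁ κ₂ ∧ κ = κ₁ + κ₂ } from
      ⟨cofin le C, cofin (fun a b => le b a) C₂, hreg1, hreg2, ⟨C, C₂, hprecut⟩, rfl⟩)
  -- cardinality bounds
  have hκ1 : cofin le C ≤ #p := le_trans (cofin_le_mk hrsp.refl C) hCcard
  have hκ2 : cofin (fun a b => le b a) C₂ ≤ #p := by
    have h1 : cofin (fun a b => le b a) C₂ ≤ #C₂ :=
      cofin_le_mk (le := fun a b => le b a) hrsp.refl C₂
    have h2 : #C₂ ≤ #{j : ι // j < istar} := Cardinal.mk_image_le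
    have hinj : Function.Injective
        (fun x : {j : ι // j < istar} => (⟨lF x.1 (hbelow x.1 x.2),
          hl1 x.1 (hbelow x.1 x.2)⟩ : {l : List (FmlInst L 1 N) // ∀ r ∈ l, r ∈ I})) := by
      intro x y hxy
      rcases lt_trichotomy x.1 y.1 with h | h | h
      · exact absurd (congrArg Subtype.val hxy)
          (winj x.1 y.1 (hbelow x.1 x.2) (hbelow y.1 y.2) h)
      · exact Subtype.ext h
      · exact absurd (congrArg Subtype.val hxy).symm
          (winj y.1 x.1 (hbelow y.1 y.2) (hbelow x.1 x.2) h)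
    have h3 : #{j : ι // j < istar} ≤ #p :=
      le_trans (Cardinal.mk_le_of_injective hinj) hlists
    exact le_trans h1 (le_trans h2 h3)
  have : pCard le ≤ #p := by
    calc pCard le ≤ cofin le C + cofin (fun a b => le b a) C₂ := hpCard_le
      _ ≤ #p + #p := add_le_add hκ1 hκ2
      _ = #p := Cardinal.add_eq_self hpinf
  exact absurd this (not_le.2 hp)

end Crux

/-- If `(N, Δ, 𝒯, ≤_𝒯, rt, R)` is an RSP and `κ = min{𝔱(𝒯), 𝔭(𝒯)}`, then `N`
is `(κ,1,Δ)`-saturated: every set of fewer than `κ` instances of formulas of `Δ` with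
parameters from `N` which is finitely satisfiable in `N` is realized by a single element
of `N`. -/
theorem rsp_saturation {L : FirstOrder.Language.{0, 0}} (N : Type) [L.Structure N]
    (Δ : Set (Σ m : ℕ, L.Formula (Fin 1 ⊕ Fin m)))
    {T : Type} (le : T → T → Prop) (rt : T) (R : N → T → Prop)
    (hrsp : IsRSP N Δ le rt R) :
    ∀ p : Set (FmlInst L 1 N),
      (∀ q ∈ p, (⟨q.1, q.2.1⟩ : Σ m : ℕ, L.Formula (Fin 1 ⊕ Fin m)) ∈ Δ) →
      #p < min (tCard le) (pCard le) →
      (∀ s ⊆ p, s.Finite → ∃ b : N, ∀ q ∈ s, Realize1 q.2.1 b q.2.2) →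
      ∃ b : N, ∀ q ∈ p, Realize1 q.2.1 b q.2.2 := by
  classical
  intro p hpΔ hcard hfs
  by_cases hpfin : p.Finite
  · exact hfs p subset_rfl hpfin
  -- infinite case
  have hpinf : ℵ₀ ≤ #p := by
    rw [Cardinal.aleph0_le_mk_iff, Set.infinite_coe_iff]
    exact hpfin
  have ht : #p < tCard le := lt_of_lt_of_le hcard (min_le_left _ _)
  have hp : #p < pCard le := lt_of_lt_of_le hcard (min_le_right _ _)
  have hfin : ∀ l : List (FmlInst L 1 N), (∀ r ∈ l, r ∈ p) → ∃ b, ∀ r ∈ l, Rea b r := by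
    intro l hl
    obtain ⟨b, hb⟩ := hfs {r | r ∈ l} hl (l.finite_toSet)
    exact ⟨b, fun r hr => hb r hr⟩
  -- enumeration of p
  set ι := (#p).ord.ToType with hι
  obtain ⟨e⟩ : Nonempty (ι ≃ ↥p) := Cardinal.eq.1 (Cardinal.mk_ord_toType (#p))
  have wf : WellFounded ((· < ·) : ι → ι → Prop) := wellFounded_lt
  -- the invariant
  set Inv : T → ι → (∀ j : ι, T) → Prop := fun x i tt =>
    (∀ j, j < i → le (tt j) x) ∧
    (∀ b, R b x → ∀ j, (j < i ∨ j = i) → Rea b (e j).1) ∧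
    GoodFor R x {r | ∃ j, i < j ∧ (e j).1 = r} with hInv
  -- the key existence statement
  have key : ∀ (i : ι) (tt : ∀ j : ι, T),
      (∀ j, j < i → Inv (tt j) j tt) → ∃ x, Inv x i tt := by
    intro i tt IH
    set Cc : Set T := insert rt (tt '' {j | j < i}) with hCc
    have hCcne : Cc.Nonempty := ⟨rt, Set.mem_insert _ _⟩
    have hCcub : ∀ c ∈ Cc, le c rt → True := fun _ _ _ => trivial
    have hrtle : ∀ x ∈ Cc, le rt x := by
      rintro x (rfl | ⟨j, hj, rfl⟩)
      · exact hrsp.refl _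
      · exact hrsp.root_le _
    have hCclin : ∀ a ∈ Cc, ∀ b ∈ Cc, le a b ∨ le b a := by
      rintro a ha b hb
      rcases ha with rfl | ⟨j, hj, rfl⟩
      · exact Or.inl (hrtle b hb)
      · rcases hb with rfl | ⟨k, hk, rfl⟩
        · exact Or.inr (hrsp.root_le _)
        · rcases lt_trichotomy j k with h | rfl | h
          · exact Or.inl ((IH k hk).1 j h)
          · exact Or.inl (hrsp.refl _)
          · exact Or.inr ((IH j hj).1 k h)
    have hCccard : #Cc ≤ #p := by
      calc #Cc ≤ #(tt '' {j | j < i}) + 1 := Cardinal.mk_insert_le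
        _ ≤ #{j : ι // j < i} + 1 := add_le_add_left Cardinal.mk_image_le 1
        _ ≤ #p + 1 := by
            refine add_le_add_left ?_ 1
            refine le_trans (Cardinal.mk_subtype_le _) ?_
            rw [hι, Cardinal.mk_ord_toType]
        _ = #p := Cardinal.add_one_eq hpinf
    set Ii : Set (FmlInst L 1 N) := {r | ∃ j : ι, ¬ j < i ∧ (e j).1 = r}
      with hIi
    have hIip : Ii ⊆ p := by
      rintro r ⟨j, -, rfl⟩
      exact (e j).2
    have hgood : ∀ a ∈ Cc, GoodFor R a Ii := by
      rintro a ha l hl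
      rcases ha with rfl | ⟨j, hj, rfl⟩
      · obtain ⟨b, hb⟩ := hfin l (fun r hr => hIip (hl r hr))
        exact ⟨b, hrsp.root_R b, hb⟩
      · refine (IH j hj).2.2 l ?_
        rintro r hr
        obtain ⟨k, hk, rfl⟩ := hl r hr
        exact ⟨k, lt_of_lt_of_le hj (not_lt.1 hk), rfl⟩
    obtain ⟨s, hs1, hs2⟩ := crux hrsp hpΔ hfin hpinf ht hp hCcne hCclin hCccard hIip hgood
    -- now shrink by the i-th formula
    have hsat : ∃ b, R b s ∧ Realize1 (e i).1.2.1 b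
        (e i).1.2.2 := by
      obtain ⟨b, hb1, hb2⟩ := hs2 [(e i).1] (by
        rintro r hr
        rw [List.mem_singleton] at hr
        subst hr
        exact ⟨i, lt_irrefl i, rfl⟩)
      exact ⟨b, hb1, hb2 _ (List.mem_singleton_self _)⟩
    obtain ⟨x, hx1, hx2⟩ := hrsp.clause_i s ⟨(e i).1.1,
      (e i).1.2.1⟩ (hpΔ _ (e i).2) (e i).1.2.2 hsat
    refine ⟨x, ?_, ?_, ?_⟩
    · intro j hj
      exact hrsp.trans _ _ _ (hs1 (tt j) (Set.mem_insert_of_mem _ ⟨j, hj, rfl⟩)) hx1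
    · intro b hb j hj
      have hb2 := (hx2 b).1 hb
      rcases hj with hj | rfl
      · have hbs : R b s := hb2.1
        have hbj : R b (tt j) :=
          hrsp.mono _ _ (hs1 (tt j) (Set.mem_insert_of_mem _ ⟨j, hj, rfl⟩)) b hbs
        exact (IH j hj).2.1 b hbj j (Or.inr rfl)
      · exact hb2.2
    · intro l hl
      obtain ⟨b, hb1, hb2⟩ := hs2 ((e i).1 :: l) (by
        rintro r hr
        rcases List.mem_cons.1 hr with rfl | hr
        · exact ⟨i, lt_irrefl i, rfl⟩
        · obtain ⟨k, hk, rfl⟩ := hl r hr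
          exact ⟨k, fun h => lt_asymm hk h, rfl⟩)
      refine ⟨b, (hx2 b).2 ⟨hb1, hb2 _ (List.mem_cons_self)⟩, ?_⟩
      exact fun r hr => hb2 r (List.mem_cons_of_mem _ hr)
  -- building the chain by recursion
  set t : ι → T := wf.fix (fun i rec =>
    if h : ∃ x, Inv x i (fun j => if hj : j < i then rec j hj else rt) then
      Classical.choose h
    else rt) with htdef
  have hcongr : ∀ (x : T) (i : ι) (tt tt' : ι → T), (∀ j, j < i → tt j = tt' j) →
      Inv x i tt → Inv x i tt' := by
    rintro x i tt tt' h ⟨h1, h2, h3⟩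
    exact ⟨fun j hj => h j hj ▸ h1 j hj, h2, h3⟩
  have hInvt : ∀ i, Inv (t i) i t := by
    intro i
    refine wf.induction (C := fun i => Inv (t i) i t) i ?_
    intro i IH
    have IH' : ∀ j, j < i →
        Inv ((fun k => if hk : k < i then t k else rt) j) j
          (fun k => if hk : k < i then t k else rt) := by
      intro j hj
      have h2 := hcongr _ j t (fun k => if hk : k < i then t k else rt)
        (fun k hk => by
          show t k = if hk : k < i then t k else rt
          rw [dif_pos (lt_trans hk hj)]) (IH j hj)
      have e : (fun k => if hk : k < i then t k else rt) j = t j := dif_pos hj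
      rw [e]
      exact h2
    obtain ⟨x, hx⟩ := key i (fun k => if hk : k < i then t k else rt) IH'
    have hex : ∃ x, Inv x i (fun j => if hj : j < i then t j else rt) := ⟨x, hx⟩
    have e0 : t i = if h : ∃ x, Inv x i (fun j => if hj : j < i then t j else rt) then
        Classical.choose h else rt := wf.fix_eq _ i
    have e1 : t i = Classical.choose hex := by
      rw [e0]
      exact dif_pos hex
    have h3 := Classical.choose_spec hex
    rw [← e1] at h3
    exact hcongr _ i _ t (fun k hk => by
      show (if h : k < i then t k else rt) = t k
      rw [dif_pos hk]) h3
  -- an upper bound for the whole chain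
  set Cf : Set T := insert rt (Set.range t) with hCf
  have hrtle : ∀ x ∈ Cf, le rt x := by
    rintro x (rfl | ⟨j, rfl⟩)
    · exact hrsp.refl _
    · exact hrsp.root_le _
  have hCflin : ∀ a ∈ Cf, ∀ b ∈ Cf, le a b ∨ le b a := by
    rintro a ha b hb
    rcases ha with rfl | ⟨j, rfl⟩
    · exact Or.inl (hrtle b hb)
    · rcases hb with rfl | ⟨k, rfl⟩
      · exact Or.inr (hrsp.root_le _)
      · rcases lt_trichotomy j k with h | rfl | h
        · exact Or.inl ((hInvt k).1 j h)
        · exact Or.inl (hrsp.refl _)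
        · exact Or.inr ((hInvt j).1 k h)
  have hCfcard : #Cf < tCard le := by
    have h1 : #Cf ≤ #p := by
      calc #Cf ≤ #(Set.range t) + 1 := Cardinal.mk_insert_le
        _ ≤ #ι + 1 := add_le_add_left Cardinal.mk_range_le 1
        _ = #p + 1 := by rw [hι, Cardinal.mk_ord_toType]
        _ = #p := Cardinal.add_one_eq hpinf
    exact lt_of_le_of_lt h1 ht
  obtain ⟨ub, hub⟩ := exists_ub_of_lt_tCard hrsp.refl hrsp.trans hCflin
    ⟨rt, Set.mem_insert _ _⟩ hCfcard
  obtain ⟨b, hb⟩ := hrsp.r_nonempty ub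
  refine ⟨b, fun q hq => ?_⟩
  set j := e.symm ⟨q, hq⟩ with hj
  have h1 : le (t j) ub := hub _ (Set.mem_insert_of_mem _ ⟨j, rfl⟩)
  have h2 : R b (t j) := hrsp.mono _ _ h1 b hb
  have h3 : Rea b (e j).1 := (hInvt j).2.1 b h2 j (Or.inr rfl)
  rw [hj, Equiv.apply_symm_apply] at h3
  exact h3

end Shelah1064
end

section
/- Let τ₀ be a vocabulary, Δ the set of all finite conjunctions of atomic first-order τ₀-formulas with one distinguished free variable x, and τ = τ₀ ∪ {𝒯, ≤_𝒯, R, P, c} ∪ {F_φ : φ ∈ Δ}, where 𝒯 and P are new unary predicates, ≤_𝒯 and R are new binary predicates, c is a new constant, and F_φ is a new (n+1)-ary function symbol for φ = φ(x, y₀,…,y_{n−1}) ∈ Δ. Then there is a set T of Horn sentences of the first-order language of τ such that for every τ-structure M: M ⊨ T if and only if (M,Δ) is a packaged RSP. -/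
open FirstOrder Cardinal

namespace Shelah1064

/-! ### Horn sentences -/

/-- A Horn clause: a disjunction of negated atomic formulas together with at most one
(non-negated) atomic formula. -/
inductive IsHornClause {L : Language} {α : Type*} : ∀ {n : ℕ}, L.BoundedFormula α n → Prop
  | pos {n} {φ : L.BoundedFormula α n} : φ.IsAtomic → IsHornClause φ
  | neg {n} {φ : L.BoundedFormula α n} : φ.IsAtomic → IsHornClause φ.not
  | cons {n} {φ ψ : L.BoundedFormula α n} :
      φ.IsAtomic → IsHornClause ψ → IsHornClause (φ.not ⊔ ψ)

/-- A Horn matrix: a conjunction of Horn clauses. -/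
inductive IsHornMatrix {L : Language} {α : Type*} : ∀ {n : ℕ}, L.BoundedFormula α n → Prop
  | of_clause {n} {φ : L.BoundedFormula α n} : IsHornClause φ → IsHornMatrix φ
  | inf {n} {φ ψ : L.BoundedFormula α n} :
      IsHornMatrix φ → IsHornMatrix ψ → IsHornMatrix (φ ⊓ ψ)

/-- A Horn formula in prenex form: quantifiers over a Horn matrix. -/
inductive IsHornPrenex {L : Language} {α : Type*} : ∀ {n : ℕ}, L.BoundedFormula α n → Prop
  | of_matrix {n} {φ : L.BoundedFormula α n} : IsHornMatrix φ → IsHornPrenex φ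
  | all {n} {φ : L.BoundedFormula α (n + 1)} : IsHornPrenex φ → IsHornPrenex φ.all
  | ex {n} {φ : L.BoundedFormula α (n + 1)} : IsHornPrenex φ → IsHornPrenex φ.ex

/-- A Horn sentence. -/
def IsHornSentence {L : Language} (σ : L.Sentence) : Prop := IsHornPrenex σ

/-! ### The vocabulary `τ = τ₀ ∪ {𝒯, ≤_𝒯, R, P, c} ∪ {F_φ : φ ∈ Δ}` -/

/-- The new relation symbols: `𝒯` and `P` (unary), `≤_𝒯` and `R` (binary). -/
inductive RSPExtraRel : ℕ → Type
  | tree : RSPExtraRel 1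
  | pp : RSPExtraRel 1
  | le : RSPExtraRel 2
  | rel : RSPExtraRel 2

/-- `Δ`: a finite conjunction of atomic `τ₀`-formulas `φ(x, y₀, …, y_{n-1})`. -/
def ConjAt (L₀ : FirstOrder.Language.{0, 0}) (n : ℕ) : Type :=
  {φ : L₀.Formula (Fin 1 ⊕ Fin n) // IsConjAtomic φ}

/-- The new function symbols: the constant `c` and, for each `φ = φ(x,y₀,…,y_{n-1}) ∈ Δ`,
an `(n+1)`-ary function symbol `F_φ`. -/
def RSPExtraFun (L₀ : FirstOrder.Language.{0, 0}) (n : ℕ) : Type :=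
  Nat.casesOn n PUnit fun m => ConjAt L₀ m

/-- The extended vocabulary `τ`. -/
def LRSP (L₀ : FirstOrder.Language.{0, 0}) : Language :=
  L₀.sum ⟨RSPExtraFun L₀, RSPExtraRel⟩

section

variable (L₀ : FirstOrder.Language.{0, 0}) {M : Type} [iM : (LRSP L₀).Structure M]

/-- The interpretation of the predicate `𝒯`. -/
def mTree (a : M) : Prop :=
  @Language.Structure.RelMap (LRSP L₀) M iM 1 (Sum.inr RSPExtraRel.tree) ![a]

/-- The interpretation of the predicate `P`. -/
def mP (a : M) : Prop :=
  @Language.Structure.RelMap (LRSP L₀) M iM 1 (Sum.inr RSPExtraRel.pp) ![a]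

/-- The interpretation of `≤_𝒯`. -/
def mLe (a b : M) : Prop :=
  @Language.Structure.RelMap (LRSP L₀) M iM 2 (Sum.inr RSPExtraRel.le) ![a, b]

/-- The interpretation of `R`. -/
def mR (a b : M) : Prop :=
  @Language.Structure.RelMap (LRSP L₀) M iM 2 (Sum.inr RSPExtraRel.rel) ![a, b]

/-- The interpretation of the constant `c` (the root). -/
def mRoot : M :=
  @Language.Structure.funMap (LRSP L₀) M iM 0 (Sum.inr PUnit.unit) ![]

/-- The interpretation of the function symbol `F_φ` at `(t, ā)`. -/
def mF {n : ℕ} (φ : ConjAt L₀ n) (t : M) (a : Fin n → M) : M :=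
  @Language.Structure.funMap (LRSP L₀) M iM (n + 1) (Sum.inr φ) (Fin.cons t a)

/-- Satisfaction `N ⊨ φ[b, ā]` for the `τ₀`-formula `φ ∈ Δ`, interpreted in the
`τ`-structure `M` via the inclusion `τ₀ ⊆ τ`. -/
def mRealize {n : ℕ} (φ : ConjAt L₀ n) (b : M) (a : Fin n → M) : Prop :=
  @Language.Formula.Realize (LRSP L₀) M iM _
    (Language.LHom.onFormula Language.LHom.sumInl φ.1) (Sum.elim (fun _ => b) a)

/-- `(M, Δ)` is a packaged RSP. -/
def PackagedRSP : Prop :=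
  -- `P^M` is closed under the `τ₀`-functions, and `τ₀`-relations hold only among `P^M`
  (∀ (n : ℕ) (f : L₀.Functions n) (x : Fin n → M), (∀ i, mP L₀ (x i)) →
    mP L₀ (@Language.Structure.funMap (LRSP L₀) M iM n (Sum.inl f) x)) ∧
  (∀ (n : ℕ) (r : L₀.Relations n) (x : Fin n → M),
    @Language.Structure.RelMap (LRSP L₀) M iM n (Sum.inl r) x → ∀ i, mP L₀ (x i)) ∧
  -- `≤_𝒯` is reflexive and transitive on `𝒯^M` with least element `c^M ∈ 𝒯^M`
  (∀ a b : M, mLe L₀ a b → mTree L₀ a ∧ mTree L₀ b) ∧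
  (∀ a : M, mTree L₀ a → mLe L₀ a a) ∧
  (∀ a b c : M, mLe L₀ a b → mLe L₀ b c → mLe L₀ a c) ∧
  mTree L₀ (mRoot L₀ : M) ∧
  (∀ a : M, mTree L₀ a → mLe L₀ (mRoot L₀) a) ∧
  -- `R^M ⊆ P^M × 𝒯^M`
  (∀ a b : M, mR L₀ a b → mP L₀ a ∧ mTree L₀ b) ∧
  -- clause (f)
  (∀ a : M, mP L₀ a → mR L₀ a (mRoot L₀)) ∧
  -- clause (g)
  (∀ s t : M, mLe L₀ s t → ∀ a : M, mR L₀ a t → mR L₀ a s) ∧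
  -- clause (h)
  (∀ t : M, mTree L₀ t → ∃ a : M, mP L₀ a ∧ mR L₀ a t) ∧
  -- clause (i)
  (∀ s : M, mTree L₀ s → ∀ (n : ℕ) (φ : ConjAt L₀ n) (av : Fin n → M),
    (∀ i, mP L₀ (av i)) → (∃ b : M, mP L₀ b ∧ mR L₀ b s ∧ mRealize L₀ φ b av) →
    ∃ t : M, mTree L₀ t ∧ mLe L₀ s t ∧
      ∀ b : M, mP L₀ b → (mR L₀ b t ↔ mR L₀ b s ∧ mRealize L₀ φ b av)) ∧
  -- clause (j), witnessed by `F_φ`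
  (∀ t : M, mTree L₀ t → ∀ (n : ℕ) (φ : ConjAt L₀ n) (av : Fin n → M),
    (∀ i, mP L₀ (av i)) → (∃ b : M, mP L₀ b ∧ mRealize L₀ φ b av) →
    mTree L₀ (mF L₀ φ t av) ∧ mLe L₀ (mF L₀ φ t av) t ∧
    (∃ b : M, mP L₀ b ∧ mR L₀ b (mF L₀ φ t av) ∧ mRealize L₀ φ b av) ∧
    ∀ s₁ : M, mTree L₀ s₁ → mLe L₀ s₁ t →
      (∃ b : M, mP L₀ b ∧ mR L₀ b s₁ ∧ mRealize L₀ φ b av) → mLe L₀ s₁ (mF L₀ φ t av))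

end

section Infra
open Language BoundedFormula
variable {L : Language} {α β : Type*}

theorem IsConjAtomic.relabel {m n : ℕ} {φ : L.BoundedFormula α m} (h : IsConjAtomic φ)
    (f : α → β ⊕ Fin n) : IsConjAtomic (φ.relabel f) := by
  induction h with
  | of_isAtomic h => exact .of_isAtomic (h.relabel f)
  | inf _ _ ih1 ih2 => exact .inf ih1 ih2

theorem IsConjAtomic.onBoundedFormula {L' : Language} (g : L →ᴸ L') {n : ℕ}
    {φ : L.BoundedFormula α n} (h : IsConjAtomic φ) :
    IsConjAtomic (g.onBoundedFormula φ) := by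
  induction h with
  | of_isAtomic h =>
    cases h with
    | equal t₁ t₂ => exact .of_isAtomic (.equal _ _)
    | rel R ts => exact .of_isAtomic (.rel _ _)
  | inf _ _ ih1 ih2 => exact .inf ih1 ih2

theorem exists_hornClause_imp {n : ℕ} {H : L.BoundedFormula α n} (hH : IsConjAtomic H) :
    ∀ {C : L.BoundedFormula α n}, IsHornClause C →
      ∃ θ : L.BoundedFormula α n, IsHornClause θ ∧
        ∀ (M : Type) (iM : L.Structure M) (v : α → M) (xs : Fin n → M),
          θ.Realize v xs ↔ (H.Realize v xs → C.Realize v xs) := by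
  induction hH with
  | of_isAtomic h =>
    rename_i φ
    intro C hC
    refine ⟨φ.not ⊔ C, .cons h hC, fun M iM v xs => ?_⟩
    simp [BoundedFormula.realize_sup, BoundedFormula.realize_not, imp_iff_not_or]
  | inf h1 h2 ih1 ih2 =>
    intro C hC
    obtain ⟨θ2, hθ2, hr2⟩ := ih2 hC
    obtain ⟨θ, hθ, hr⟩ := ih1 hθ2
    refine ⟨θ, hθ, fun M iM v xs => ?_⟩
    rw [hr, hr2]
    simp only [BoundedFormula.realize_inf]
    tauto

theorem exists_hornMatrix_imp {n : ℕ} {H : L.BoundedFormula α n} (hH : IsConjAtomic H)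
    {C : L.BoundedFormula α n} (hC : IsHornMatrix C) :
      ∃ θ : L.BoundedFormula α n, IsHornMatrix θ ∧
        ∀ (M : Type) (iM : L.Structure M) (v : α → M) (xs : Fin n → M),
          θ.Realize v xs ↔ (H.Realize v xs → C.Realize v xs) := by
  induction hC with
  | of_clause h =>
    obtain ⟨θ, a, b⟩ := exists_hornClause_imp hH h
    exact ⟨θ, .of_clause a, b⟩
  | inf h1 h2 ih1 ih2 =>
    obtain ⟨θ1, hθ1, hr1⟩ := ih1
    obtain ⟨θ2, hθ2, hr2⟩ := ih2
    refine ⟨θ1 ⊓ θ2, .inf hθ1 hθ2, fun M iM v xs => ?_⟩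
    simp only [BoundedFormula.realize_inf, hr1 M iM v xs, hr2 M iM v xs]
    tauto

theorem IsConjAtomic.isHornMatrix {n : ℕ} {φ : L.BoundedFormula α n} (h : IsConjAtomic φ) :
    IsHornMatrix φ := by
  induction h with
  | of_isAtomic h => exact .of_clause (.pos h)
  | inf _ _ ih1 ih2 => exact .inf ih1 ih2

theorem exists_hornMatrix_listImp {n : ℕ} :
    ∀ (Hs : List (L.BoundedFormula α n)), (∀ H ∈ Hs, IsConjAtomic H) →
    ∀ {C : L.BoundedFormula α n}, IsHornMatrix C →
      ∃ θ : L.BoundedFormula α n, IsHornMatrix θ ∧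
        ∀ (M : Type) (iM : L.Structure M) (v : α → M) (xs : Fin n → M),
          θ.Realize v xs ↔ ((∀ H ∈ Hs, H.Realize v xs) → C.Realize v xs)
  | [], _, C, hC => ⟨C, hC, fun M iM v xs => by simp⟩
  | (H :: Hs), hall, C, hC => by
    obtain ⟨θ1, hθ1, hr1⟩ :=
      exists_hornMatrix_listImp Hs (fun H h => hall H (List.mem_cons_of_mem _ h)) hC
    obtain ⟨θ, hθ, hr⟩ := exists_hornMatrix_imp (hall H List.mem_cons_self) hθ1
    refine ⟨θ, hθ, fun M iM v xs => ?_⟩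
    rw [hr M iM v xs, hr1 M iM v xs]
    simp only [List.forall_mem_cons]
    tauto

theorem IsHornPrenex.alls : ∀ {n : ℕ} {φ : L.BoundedFormula α n},
    IsHornPrenex φ → IsHornPrenex φ.alls
  | 0, _, h => h
  | _ + 1, φ, h => IsHornPrenex.alls (φ := φ.all) h.all

theorem exists_horn_sentence_forall {k : ℕ} {θ : L.BoundedFormula Empty k}
    (hθ : IsHornMatrix θ) :
    ∃ σ : L.Sentence, IsHornSentence σ ∧ ∀ (M : Type) (iM : L.Structure M),
      σ.Realize M ↔ ∀ xs : Fin k → M, θ.Realize default xs := by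
  refine ⟨θ.alls, IsHornPrenex.alls (.of_matrix hθ), fun M iM => ?_⟩
  exact BoundedFormula.realize_alls

theorem exists_horn_sentence_fa_ex {k : ℕ} {θ : L.BoundedFormula Empty (k + 1)}
    (hθ : IsHornMatrix θ) :
    ∃ σ : L.Sentence, IsHornSentence σ ∧ ∀ (M : Type) (iM : L.Structure M),
      σ.Realize M ↔ ∀ xs : Fin k → M, ∃ a : M, θ.Realize default (Fin.snoc xs a) := by
  refine ⟨θ.ex.alls, IsHornPrenex.alls ((IsHornPrenex.of_matrix hθ).ex), fun M iM => ?_⟩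
  rw [Sentence.Realize, BoundedFormula.realize_alls]
  simp only [BoundedFormula.realize_ex]

theorem exists_horn_sentence_fa_ex_fa {k : ℕ} {θ : L.BoundedFormula Empty (k + 2)}
    (hθ : IsHornMatrix θ) :
    ∃ σ : L.Sentence, IsHornSentence σ ∧ ∀ (M : Type) (iM : L.Structure M),
      σ.Realize M ↔ ∀ xs : Fin k → M, ∃ a : M, ∀ b : M,
        θ.Realize default (Fin.snoc (Fin.snoc xs a) b) := by
  refine ⟨θ.all.ex.alls, IsHornPrenex.alls (((IsHornPrenex.of_matrix hθ).all).ex),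
    fun M iM => ?_⟩
  rw [Sentence.Realize, BoundedFormula.realize_alls]
  simp only [BoundedFormula.realize_ex, BoundedFormula.realize_all]

theorem exists_horn_sentence_fa_ex_fa2 {k : ℕ} {θ : L.BoundedFormula Empty (k + 3)}
    (hθ : IsHornMatrix θ) :
    ∃ σ : L.Sentence, IsHornSentence σ ∧ ∀ (M : Type) (iM : L.Structure M),
      σ.Realize M ↔ ∀ xs : Fin k → M, ∃ a : M, ∀ b c : M,
        θ.Realize default (Fin.snoc (Fin.snoc (Fin.snoc xs a) b) c) := by
  refine ⟨θ.all.all.ex.alls,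
    IsHornPrenex.alls ((((IsHornPrenex.of_matrix hθ).all).all).ex), fun M iM => ?_⟩
  rw [Sentence.Realize, BoundedFormula.realize_alls]
  simp only [BoundedFormula.realize_ex, BoundedFormula.realize_all]

end Infra
section Atoms
open Language BoundedFormula

variable (L₀ : FirstOrder.Language.{0,0})

/-- Variable term. -/
def vr {k : ℕ} (i : Fin k) : (LRSP L₀).Term (Empty ⊕ Fin k) := Term.var (Sum.inr i)

/-- The root constant as a term. -/
def rootT {k : ℕ} : (LRSP L₀).Term (Empty ⊕ Fin k) :=
  Term.func (L := LRSP L₀) (l := 0) (Sum.inr PUnit.unit) finZeroElim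

/-- `F_φ(t, ā)` as a term. -/
def fT {k n : ℕ} (φ : ConjAt L₀ n) (t : Fin k) (a : Fin n → Fin k) :
    (LRSP L₀).Term (Empty ⊕ Fin k) :=
  Term.func (L := LRSP L₀) (l := n + 1) (Sum.inr φ)
    (fun j => Term.var (Sum.inr (Fin.cons (α := fun _ => Fin k) t a j)))

variable {M : Type} [iM : (LRSP L₀).Structure M]

lemma realize_vr {k : ℕ} (i : Fin k) (v : Empty → M) (xs : Fin k → M) :
    (vr L₀ i).realize (Sum.elim v xs) = xs i := rfl

lemma realize_rootT {k : ℕ} (v : Empty → M) (xs : Fin k → M) :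
    (rootT L₀ (k := k)).realize (Sum.elim v xs) = mRoot L₀ := by
  rw [rootT, mRoot]
  erw [Term.realize_func]
  congr 1
  funext j
  exact j.elim0

lemma realize_fT {k n : ℕ} (φ : ConjAt L₀ n) (t : Fin k) (a : Fin n → Fin k)
    (v : Empty → M) (xs : Fin k → M) :
    (fT L₀ φ t a).realize (Sum.elim v xs) = mF L₀ φ (xs t) (xs ∘ a) := by
  rw [fT, mF]
  erw [Term.realize_func]
  congr 1
  funext j
  refine Fin.cases ?_ (fun i => ?_) j
  · simp [Term.realize, Fin.cons_zero]
  · simp [Term.realize, Fin.cons_succ, Function.comp]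

/-- `𝒯 t` as an atomic formula. -/
def treeA {k : ℕ} (t : (LRSP L₀).Term (Empty ⊕ Fin k)) : (LRSP L₀).BoundedFormula Empty k :=
  Relations.boundedFormula₁ (Sum.inr RSPExtraRel.tree) t

/-- `P t` as an atomic formula. -/
def ppA {k : ℕ} (t : (LRSP L₀).Term (Empty ⊕ Fin k)) : (LRSP L₀).BoundedFormula Empty k :=
  Relations.boundedFormula₁ (Sum.inr RSPExtraRel.pp) t

/-- `t₁ ≤_𝒯 t₂` as an atomic formula. -/
def leA {k : ℕ} (t₁ t₂ : (LRSP L₀).Term (Empty ⊕ Fin k)) : (LRSP L₀).BoundedFormula Empty k :=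
  Relations.boundedFormula₂ (Sum.inr RSPExtraRel.le) t₁ t₂

/-- `R t₁ t₂` as an atomic formula. -/
def rA {k : ℕ} (t₁ t₂ : (LRSP L₀).Term (Empty ⊕ Fin k)) : (LRSP L₀).BoundedFormula Empty k :=
  Relations.boundedFormula₂ (Sum.inr RSPExtraRel.rel) t₁ t₂

lemma treeA_conj {k : ℕ} (t : (LRSP L₀).Term (Empty ⊕ Fin k)) : IsConjAtomic (treeA L₀ t) :=
  .of_isAtomic (.rel _ _)

lemma ppA_conj {k : ℕ} (t : (LRSP L₀).Term (Empty ⊕ Fin k)) : IsConjAtomic (ppA L₀ t) :=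
  .of_isAtomic (.rel _ _)

lemma leA_conj {k : ℕ} (t₁ t₂ : (LRSP L₀).Term (Empty ⊕ Fin k)) : IsConjAtomic (leA L₀ t₁ t₂) :=
  .of_isAtomic (.rel _ _)

lemma rA_conj {k : ℕ} (t₁ t₂ : (LRSP L₀).Term (Empty ⊕ Fin k)) : IsConjAtomic (rA L₀ t₁ t₂) :=
  .of_isAtomic (.rel _ _)

lemma realize_treeA {k : ℕ} (t : (LRSP L₀).Term (Empty ⊕ Fin k)) (v : Empty → M)
    (xs : Fin k → M) : (treeA L₀ t).Realize v xs ↔ mTree L₀ (t.realize (Sum.elim v xs)) := by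
  rw [treeA]; erw [BoundedFormula.realize_rel₁]; rfl

lemma realize_ppA {k : ℕ} (t : (LRSP L₀).Term (Empty ⊕ Fin k)) (v : Empty → M)
    (xs : Fin k → M) : (ppA L₀ t).Realize v xs ↔ mP L₀ (t.realize (Sum.elim v xs)) := by
  rw [ppA]; erw [BoundedFormula.realize_rel₁]; rfl

lemma realize_leA {k : ℕ} (t₁ t₂ : (LRSP L₀).Term (Empty ⊕ Fin k)) (v : Empty → M)
    (xs : Fin k → M) : (leA L₀ t₁ t₂).Realize v xs ↔
      mLe L₀ (t₁.realize (Sum.elim v xs)) (t₂.realize (Sum.elim v xs)) := by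
  rw [leA]; erw [BoundedFormula.realize_rel₂]; rfl

lemma realize_rA {k : ℕ} (t₁ t₂ : (LRSP L₀).Term (Empty ⊕ Fin k)) (v : Empty → M)
    (xs : Fin k → M) : (rA L₀ t₁ t₂).Realize v xs ↔
      mR L₀ (t₁.realize (Sum.elim v xs)) (t₂.realize (Sum.elim v xs)) := by
  rw [rA]; erw [BoundedFormula.realize_rel₂]; rfl

/-- The formula `φ(x_b, x_{a 0}, …)` for `φ ∈ Δ`, with variables relabelled. -/
def phiA {k n : ℕ} (φ : ConjAt L₀ n) (b : Fin k) (a : Fin n → Fin k) :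
    (LRSP L₀).BoundedFormula Empty k :=
  Language.BoundedFormula.relabel
    (fun j => Sum.inr (Sum.elim (fun _ => b) a j)) (Language.LHom.sumInl.onFormula φ.1)

lemma phiA_conj {k n : ℕ} (φ : ConjAt L₀ n) (b : Fin k) (a : Fin n → Fin k) :
    IsConjAtomic (phiA L₀ φ b a) :=
  IsConjAtomic.relabel (φ.2.onBoundedFormula _) _

lemma realize_phiA {k n : ℕ} (φ : ConjAt L₀ n) (b : Fin k) (a : Fin n → Fin k)
    (v : Empty → M) (xs : Fin k → M) :
    (phiA L₀ φ b a).Realize v xs ↔ mRealize L₀ φ (xs b) (xs ∘ a) := by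
  rw [phiA]
  erw [BoundedFormula.realize_relabel]
  have h1 : (Sum.elim v (xs ∘ Fin.castAdd 0) ∘ fun j => Sum.inr (Sum.elim (fun _ => b) a j))
      = Sum.elim (fun _ : Fin 1 => xs b) (xs ∘ a) := by
    funext j
    cases j with
    | inl j => simp [Fin.castAdd_zero]
    | inr j => simp [Fin.castAdd_zero]
  rw [h1]
  have h2 : (xs ∘ Fin.natAdd k) = (default : Fin 0 → M) := funext fun i => i.elim0
  rw [h2]
  rfl

end Atoms
section Axioms
open Language BoundedFormula

lemma forall_snoc_iff {M : Type} {k : ℕ} {P : (Fin (k + 1) → M) → Prop} :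
    (∀ xs : Fin (k + 1) → M, P xs) ↔ ∀ (ys : Fin k → M) (a : M), P (Fin.snoc ys a) :=
  ⟨fun h ys a => h _, fun h xs => by
    rw [← Fin.snoc_init_self xs]; exact h _ _⟩

lemma forall_fin0_iff {M : Type} {P : (Fin 0 → M) → Prop} :
    (∀ xs : Fin 0 → M, P xs) ↔ P finZeroElim :=
  ⟨fun h => h _, fun h xs => by
    rw [show xs = finZeroElim from funext fun i => i.elim0]; exact h⟩

variable (L₀ : FirstOrder.Language.{0,0})

lemma ax_pfun {n : ℕ} (f : L₀.Functions n) :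
    ∃ σ : (LRSP L₀).Sentence, IsHornSentence σ ∧
      ∀ (M : Type) (iM : (LRSP L₀).Structure M), σ.Realize M ↔
        ∀ x : Fin n → M, (∀ i, mP L₀ (x i)) →
          mP L₀ (@Language.Structure.funMap (LRSP L₀) M iM n (Sum.inl f) x) := by
  obtain ⟨θ, hθ, hr⟩ := exists_hornMatrix_listImp
    ((List.finRange n).map (fun i => ppA L₀ (vr L₀ i)))
    (by
      intro H hH
      obtain ⟨i, -, rfl⟩ := List.mem_map.mp hH
      exact ppA_conj L₀ _)
    (ppA_conj L₀ (Term.func (Sum.inl f) (fun i => vr L₀ i))).isHornMatrix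
  obtain ⟨σ, hσ, hs⟩ := exists_horn_sentence_forall hθ
  refine ⟨σ, hσ, fun M iM => ?_⟩
  rw [hs M iM]
  simp only [hr M iM, List.forall_mem_cons, List.forall_mem_singleton, List.forall_mem_map,
    List.mem_finRange, List.forall_mem_nil, true_implies, and_imp, Term.realize_func,
    realize_treeA, realize_ppA, realize_leA, realize_rA, realize_vr, realize_rootT,
    realize_fT, realize_phiA, BoundedFormula.realize_inf, forall_snoc_iff, forall_fin0_iff,
    Fin.snoc_castSucc, Fin.snoc_last, Function.comp, BoundedFormula.realize_rel,
    List.not_mem_nil, false_implies, forall_const, implies_true, true_and, and_true]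
  exact Iff.rfl

lemma ax_prel {n : ℕ} (r : L₀.Relations n) (i : Fin n) :
    ∃ σ : (LRSP L₀).Sentence, IsHornSentence σ ∧
      ∀ (M : Type) (iM : (LRSP L₀).Structure M), σ.Realize M ↔
        ∀ x : Fin n → M,
          @Language.Structure.RelMap (LRSP L₀) M iM n (Sum.inl r) x → mP L₀ (x i) := by
  obtain ⟨θ, hθ, hr⟩ := exists_hornMatrix_listImp
    [Relations.boundedFormula (Sum.inl r) (fun j => vr L₀ j)]
    (by
      intro H hH
      rw [List.mem_singleton] at hH
      subst hH
      exact .of_isAtomic (.rel _ _))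
    (ppA_conj L₀ (vr L₀ i)).isHornMatrix
  obtain ⟨σ, hσ, hs⟩ := exists_horn_sentence_forall hθ
  refine ⟨σ, hσ, fun M iM => ?_⟩
  rw [hs M iM]
  simp only [hr M iM, List.forall_mem_cons, List.forall_mem_singleton, List.forall_mem_map,
    List.mem_finRange, List.forall_mem_nil, true_implies, and_imp, Term.realize_func,
    realize_treeA, realize_ppA, realize_leA, realize_rA, realize_vr, realize_rootT,
    realize_fT, realize_phiA, BoundedFormula.realize_inf, forall_snoc_iff, forall_fin0_iff,
    Fin.snoc_castSucc, Fin.snoc_last, Function.comp, BoundedFormula.realize_rel,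
    List.not_mem_nil, false_implies, forall_const, implies_true, true_and, and_true]
  exact Iff.rfl

lemma ax_le_tree :
    ∃ σ : (LRSP L₀).Sentence, IsHornSentence σ ∧
      ∀ (M : Type) (iM : (LRSP L₀).Structure M), σ.Realize M ↔
        ∀ a b : M, mLe L₀ a b → mTree L₀ a ∧ mTree L₀ b := by
  obtain ⟨θ, hθ, hr⟩ := exists_hornMatrix_listImp
    [leA L₀ (vr L₀ ((Fin.last 0).castSucc)) (vr L₀ (Fin.last 1))]
    (by
      intro H hH
      rw [List.mem_singleton] at hH
      subst hH
      exact leA_conj L₀ _ _)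
    ((treeA_conj L₀ (vr L₀ ((Fin.last 0).castSucc))).inf
      (treeA_conj L₀ (vr L₀ (Fin.last 1)))).isHornMatrix
  obtain ⟨σ, hσ, hs⟩ := exists_horn_sentence_forall hθ
  refine ⟨σ, hσ, fun M iM => ?_⟩
  rw [hs M iM]
  simp only [hr M iM, List.forall_mem_cons, List.forall_mem_singleton, List.forall_mem_map,
    List.mem_finRange, List.forall_mem_nil, true_implies, and_imp, Term.realize_func,
    realize_treeA, realize_ppA, realize_leA, realize_rA, realize_vr, realize_rootT,
    realize_fT, realize_phiA, BoundedFormula.realize_inf, forall_snoc_iff, forall_fin0_iff,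
    Fin.snoc_castSucc, Fin.snoc_last, Function.comp, BoundedFormula.realize_rel,
    List.not_mem_nil, false_implies, forall_const, implies_true, true_and, and_true]

lemma ax_refl :
    ∃ σ : (LRSP L₀).Sentence, IsHornSentence σ ∧
      ∀ (M : Type) (iM : (LRSP L₀).Structure M), σ.Realize M ↔
        ∀ a : M, mTree L₀ a → mLe L₀ a a := by
  obtain ⟨θ, hθ, hr⟩ := exists_hornMatrix_listImp [treeA L₀ (vr L₀ (Fin.last 0))]
    (by
      intro H hH
      rw [List.mem_singleton] at hH
      subst hH
      exact treeA_conj L₀ _)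
    (leA_conj L₀ (vr L₀ (Fin.last 0)) (vr L₀ (Fin.last 0))).isHornMatrix
  obtain ⟨σ, hσ, hs⟩ := exists_horn_sentence_forall hθ
  refine ⟨σ, hσ, fun M iM => ?_⟩
  rw [hs M iM]
  simp only [hr M iM, List.forall_mem_cons, List.forall_mem_singleton, List.forall_mem_map,
    List.mem_finRange, List.forall_mem_nil, true_implies, and_imp, Term.realize_func,
    realize_treeA, realize_ppA, realize_leA, realize_rA, realize_vr, realize_rootT,
    realize_fT, realize_phiA, BoundedFormula.realize_inf, forall_snoc_iff, forall_fin0_iff,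
    Fin.snoc_castSucc, Fin.snoc_last, Function.comp, BoundedFormula.realize_rel,
    List.not_mem_nil, false_implies, forall_const, implies_true, true_and, and_true]

lemma ax_trans :
    ∃ σ : (LRSP L₀).Sentence, IsHornSentence σ ∧
      ∀ (M : Type) (iM : (LRSP L₀).Structure M), σ.Realize M ↔
        ∀ a b c : M, mLe L₀ a b → mLe L₀ b c → mLe L₀ a c := by
  obtain ⟨θ, hθ, hr⟩ := exists_hornMatrix_listImp
    [leA L₀ (vr L₀ ((Fin.last 0).castSucc.castSucc)) (vr L₀ ((Fin.last 1).castSucc)),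
      leA L₀ (vr L₀ ((Fin.last 1).castSucc)) (vr L₀ (Fin.last 2))]
    (by
      intro H hH
      rw [List.mem_cons, List.mem_singleton] at hH
      rcases hH with rfl | rfl
      · exact leA_conj L₀ _ _
      · exact leA_conj L₀ _ _)
    (leA_conj L₀ (vr L₀ ((Fin.last 0).castSucc.castSucc)) (vr L₀ (Fin.last 2))).isHornMatrix
  obtain ⟨σ, hσ, hs⟩ := exists_horn_sentence_forall hθ
  refine ⟨σ, hσ, fun M iM => ?_⟩
  rw [hs M iM]
  simp only [hr M iM, List.forall_mem_cons, List.forall_mem_singleton, List.forall_mem_map,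
    List.mem_finRange, List.forall_mem_nil, true_implies, and_imp, Term.realize_func,
    realize_treeA, realize_ppA, realize_leA, realize_rA, realize_vr, realize_rootT,
    realize_fT, realize_phiA, BoundedFormula.realize_inf, forall_snoc_iff, forall_fin0_iff,
    Fin.snoc_castSucc, Fin.snoc_last, Function.comp, BoundedFormula.realize_rel,
    List.not_mem_nil, false_implies, forall_const, implies_true, true_and, and_true]

lemma ax_root_tree :
    ∃ σ : (LRSP L₀).Sentence, IsHornSentence σ ∧
      ∀ (M : Type) (iM : (LRSP L₀).Structure M), σ.Realize M ↔ mTree L₀ (mRoot L₀ : M) := by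
  obtain ⟨θ, hθ, hr⟩ := exists_hornMatrix_listImp ([] : List ((LRSP L₀).BoundedFormula Empty 0))
    (by intro H hH; exact absurd hH List.not_mem_nil)
    (treeA_conj L₀ (rootT L₀)).isHornMatrix
  obtain ⟨σ, hσ, hs⟩ := exists_horn_sentence_forall hθ
  refine ⟨σ, hσ, fun M iM => ?_⟩
  rw [hs M iM]
  simp only [hr M iM, List.forall_mem_cons, List.forall_mem_singleton, List.forall_mem_map,
    List.mem_finRange, List.forall_mem_nil, true_implies, and_imp, Term.realize_func,
    realize_treeA, realize_ppA, realize_leA, realize_rA, realize_vr, realize_rootT,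
    realize_fT, realize_phiA, BoundedFormula.realize_inf, forall_snoc_iff, forall_fin0_iff,
    Fin.snoc_castSucc, Fin.snoc_last, Function.comp, BoundedFormula.realize_rel,
    List.not_mem_nil, false_implies, forall_const, implies_true, true_and, and_true]

lemma ax_root_le :
    ∃ σ : (LRSP L₀).Sentence, IsHornSentence σ ∧
      ∀ (M : Type) (iM : (LRSP L₀).Structure M), σ.Realize M ↔
        ∀ a : M, mTree L₀ a → mLe L₀ (mRoot L₀) a := by
  obtain ⟨θ, hθ, hr⟩ := exists_hornMatrix_listImp [treeA L₀ (vr L₀ (Fin.last 0))]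
    (by
      intro H hH
      rw [List.mem_singleton] at hH
      subst hH
      exact treeA_conj L₀ _)
    (leA_conj L₀ (rootT L₀) (vr L₀ (Fin.last 0))).isHornMatrix
  obtain ⟨σ, hσ, hs⟩ := exists_horn_sentence_forall hθ
  refine ⟨σ, hσ, fun M iM => ?_⟩
  rw [hs M iM]
  simp only [hr M iM, List.forall_mem_cons, List.forall_mem_singleton, List.forall_mem_map,
    List.mem_finRange, List.forall_mem_nil, true_implies, and_imp, Term.realize_func,
    realize_treeA, realize_ppA, realize_leA, realize_rA, realize_vr, realize_rootT,
    realize_fT, realize_phiA, BoundedFormula.realize_inf, forall_snoc_iff, forall_fin0_iff,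
    Fin.snoc_castSucc, Fin.snoc_last, Function.comp, BoundedFormula.realize_rel,
    List.not_mem_nil, false_implies, forall_const, implies_true, true_and, and_true]

lemma ax_r_sub :
    ∃ σ : (LRSP L₀).Sentence, IsHornSentence σ ∧
      ∀ (M : Type) (iM : (LRSP L₀).Structure M), σ.Realize M ↔
        ∀ a b : M, mR L₀ a b → mP L₀ a ∧ mTree L₀ b := by
  obtain ⟨θ, hθ, hr⟩ := exists_hornMatrix_listImp
    [rA L₀ (vr L₀ ((Fin.last 0).castSucc)) (vr L₀ (Fin.last 1))]
    (by
      intro H hH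
      rw [List.mem_singleton] at hH
      subst hH
      exact rA_conj L₀ _ _)
    ((ppA_conj L₀ (vr L₀ ((Fin.last 0).castSucc))).inf
      (treeA_conj L₀ (vr L₀ (Fin.last 1)))).isHornMatrix
  obtain ⟨σ, hσ, hs⟩ := exists_horn_sentence_forall hθ
  refine ⟨σ, hσ, fun M iM => ?_⟩
  rw [hs M iM]
  simp only [hr M iM, List.forall_mem_cons, List.forall_mem_singleton, List.forall_mem_map,
    List.mem_finRange, List.forall_mem_nil, true_implies, and_imp, Term.realize_func,
    realize_treeA, realize_ppA, realize_leA, realize_rA, realize_vr, realize_rootT,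
    realize_fT, realize_phiA, BoundedFormula.realize_inf, forall_snoc_iff, forall_fin0_iff,
    Fin.snoc_castSucc, Fin.snoc_last, Function.comp, BoundedFormula.realize_rel,
    List.not_mem_nil, false_implies, forall_const, implies_true, true_and, and_true]

lemma ax_f :
    ∃ σ : (LRSP L₀).Sentence, IsHornSentence σ ∧
      ∀ (M : Type) (iM : (LRSP L₀).Structure M), σ.Realize M ↔
        ∀ a : M, mP L₀ a → mR L₀ a (mRoot L₀) := by
  obtain ⟨θ, hθ, hr⟩ := exists_hornMatrix_listImp [ppA L₀ (vr L₀ (Fin.last 0))]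
    (by
      intro H hH
      rw [List.mem_singleton] at hH
      subst hH
      exact ppA_conj L₀ _)
    (rA_conj L₀ (vr L₀ (Fin.last 0)) (rootT L₀)).isHornMatrix
  obtain ⟨σ, hσ, hs⟩ := exists_horn_sentence_forall hθ
  refine ⟨σ, hσ, fun M iM => ?_⟩
  rw [hs M iM]
  simp only [hr M iM, List.forall_mem_cons, List.forall_mem_singleton, List.forall_mem_map,
    List.mem_finRange, List.forall_mem_nil, true_implies, and_imp, Term.realize_func,
    realize_treeA, realize_ppA, realize_leA, realize_rA, realize_vr, realize_rootT,
    realize_fT, realize_phiA, BoundedFormula.realize_inf, forall_snoc_iff, forall_fin0_iff,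
    Fin.snoc_castSucc, Fin.snoc_last, Function.comp, BoundedFormula.realize_rel,
    List.not_mem_nil, false_implies, forall_const, implies_true, true_and, and_true]

lemma ax_g :
    ∃ σ : (LRSP L₀).Sentence, IsHornSentence σ ∧
      ∀ (M : Type) (iM : (LRSP L₀).Structure M), σ.Realize M ↔
        ∀ s t : M, mLe L₀ s t → ∀ a : M, mR L₀ a t → mR L₀ a s := by
  obtain ⟨θ, hθ, hr⟩ := exists_hornMatrix_listImp
    [leA L₀ (vr L₀ ((Fin.last 0).castSucc.castSucc)) (vr L₀ ((Fin.last 1).castSucc)),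
      rA L₀ (vr L₀ (Fin.last 2)) (vr L₀ ((Fin.last 1).castSucc))]
    (by
      intro H hH
      rw [List.mem_cons, List.mem_singleton] at hH
      rcases hH with rfl | rfl
      · exact leA_conj L₀ _ _
      · exact rA_conj L₀ _ _)
    (rA_conj L₀ (vr L₀ (Fin.last 2)) (vr L₀ ((Fin.last 0).castSucc.castSucc))).isHornMatrix
  obtain ⟨σ, hσ, hs⟩ := exists_horn_sentence_forall hθ
  refine ⟨σ, hσ, fun M iM => ?_⟩
  rw [hs M iM]
  simp only [hr M iM, List.forall_mem_cons, List.forall_mem_singleton, List.forall_mem_map,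
    List.mem_finRange, List.forall_mem_nil, true_implies, and_imp, Term.realize_func,
    realize_treeA, realize_ppA, realize_leA, realize_rA, realize_vr, realize_rootT,
    realize_fT, realize_phiA, BoundedFormula.realize_inf, forall_snoc_iff, forall_fin0_iff,
    Fin.snoc_castSucc, Fin.snoc_last, Function.comp, BoundedFormula.realize_rel,
    List.not_mem_nil, false_implies, forall_const, implies_true, true_and, and_true]
  exact ⟨fun h s t hle a hr' => h s t a hle hr', fun h a b c hle hr' => h a b hle c hr'⟩

lemma ax_h :
    ∃ σ : (LRSP L₀).Sentence, IsHornSentence σ ∧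
      ∀ (M : Type) (iM : (LRSP L₀).Structure M), σ.Realize M ↔
        ∀ t : M, ∃ a : M, mTree L₀ t → mP L₀ a ∧ mR L₀ a t := by
  obtain ⟨θ, hθ, hr⟩ := exists_hornMatrix_listImp
    [treeA L₀ (vr L₀ ((Fin.last 0).castSucc))]
    (by
      intro H hH
      rw [List.mem_singleton] at hH
      subst hH
      exact treeA_conj L₀ _)
    ((ppA_conj L₀ (vr L₀ (Fin.last 1))).inf
      (rA_conj L₀ (vr L₀ (Fin.last 1)) (vr L₀ ((Fin.last 0).castSucc)))).isHornMatrix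
  obtain ⟨σ, hσ, hs⟩ := exists_horn_sentence_fa_ex hθ
  refine ⟨σ, hσ, fun M iM => ?_⟩
  rw [hs M iM]
  simp only [hr M iM, List.forall_mem_cons, List.forall_mem_singleton, List.forall_mem_map,
    List.mem_finRange, List.forall_mem_nil, true_implies, and_imp, Term.realize_func,
    realize_treeA, realize_ppA, realize_leA, realize_rA, realize_vr, realize_rootT,
    realize_fT, realize_phiA, BoundedFormula.realize_inf, forall_snoc_iff, forall_fin0_iff,
    Fin.snoc_castSucc, Fin.snoc_last, Function.comp, BoundedFormula.realize_rel,
    List.not_mem_nil, false_implies, forall_const, implies_true, true_and, and_true]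

end Axioms
section AxiomsIJ
open Language BoundedFormula

variable (L₀ : FirstOrder.Language.{0,0})

lemma ax_i {n : ℕ} (φ : ConjAt L₀ n) :
    ∃ σ : (LRSP L₀).Sentence, IsHornSentence σ ∧
      ∀ (M : Type) (iM : (LRSP L₀).Structure M), σ.Realize M ↔
        ∀ (av : Fin n → M) (s b₀ : M), ∃ t : M, ∀ b : M,
          mTree L₀ s → mP L₀ b₀ → mR L₀ b₀ s → mRealize L₀ φ b₀ av →
            (∀ i, mP L₀ (av i)) →
          (mTree L₀ t ∧ (mLe L₀ s t ∧
            ((mP L₀ b → mR L₀ b t → mR L₀ b s) ∧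
            ((mP L₀ b → mR L₀ b t → mRealize L₀ φ b av) ∧
            (mP L₀ b → mR L₀ b s → mRealize L₀ φ b av → mR L₀ b t))))) := by
  obtain ⟨θ1, hθ1, hr1⟩ := exists_hornMatrix_listImp
    [ppA L₀ (vr L₀ (Fin.last (n + 3))), rA L₀ (vr L₀ (Fin.last (n + 3))) (vr L₀ ((Fin.last (n + 2)).castSucc))]
    (by
      intro H hH
      rw [List.mem_cons, List.mem_singleton] at hH
      rcases hH with rfl | rfl
      · exact ppA_conj L₀ _
      · exact rA_conj L₀ _ _)
    (rA_conj L₀ (vr L₀ (Fin.last (n + 3))) (vr L₀ ((Fin.last n).castSucc.castSucc.castSucc))).isHornMatrix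
  obtain ⟨θ2, hθ2, hr2⟩ := exists_hornMatrix_listImp
    [ppA L₀ (vr L₀ (Fin.last (n + 3))), rA L₀ (vr L₀ (Fin.last (n + 3))) (vr L₀ ((Fin.last (n + 2)).castSucc))]
    (by
      intro H hH
      rw [List.mem_cons, List.mem_singleton] at hH
      rcases hH with rfl | rfl
      · exact ppA_conj L₀ _
      · exact rA_conj L₀ _ _)
    (phiA_conj L₀ φ (Fin.last (n + 3)) (fun i : Fin n => i.castSucc.castSucc.castSucc.castSucc)).isHornMatrix
  obtain ⟨θ3, hθ3, hr3⟩ := exists_hornMatrix_listImp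
    [ppA L₀ (vr L₀ (Fin.last (n + 3))), rA L₀ (vr L₀ (Fin.last (n + 3))) (vr L₀ ((Fin.last n).castSucc.castSucc.castSucc)), phiA L₀ φ (Fin.last (n + 3)) (fun i : Fin n => i.castSucc.castSucc.castSucc.castSucc)]
    (by
      intro H hH
      rw [List.mem_cons, List.mem_cons, List.mem_singleton] at hH
      rcases hH with rfl | rfl | rfl
      · exact ppA_conj L₀ _
      · exact rA_conj L₀ _ _
      · exact phiA_conj L₀ _ _ _)
    (rA_conj L₀ (vr L₀ (Fin.last (n + 3))) (vr L₀ ((Fin.last (n + 2)).castSucc))).isHornMatrix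
  obtain ⟨θ, hθ, hr⟩ := exists_hornMatrix_listImp
    (treeA L₀ (vr L₀ ((Fin.last n).castSucc.castSucc.castSucc)) :: ppA L₀ (vr L₀ ((Fin.last (n + 1)).castSucc.castSucc)) :: rA L₀ (vr L₀ ((Fin.last (n + 1)).castSucc.castSucc)) (vr L₀ ((Fin.last n).castSucc.castSucc.castSucc)) ::
      phiA L₀ φ ((Fin.last (n + 1)).castSucc.castSucc) (fun i : Fin n => i.castSucc.castSucc.castSucc.castSucc) :: (List.finRange n).map (fun i => ppA L₀ (vr L₀ ((fun i : Fin n => i.castSucc.castSucc.castSucc.castSucc) i))))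
    (by
      intro H hH
      simp only [List.mem_cons, List.mem_map, List.mem_finRange, List.not_mem_nil, or_false,
        true_and] at hH
      rcases hH with rfl | rfl | rfl | rfl | ⟨i, rfl⟩
      exacts [treeA_conj L₀ _, ppA_conj L₀ _, rA_conj L₀ _ _, phiA_conj L₀ _ _ _,
        ppA_conj L₀ _])
    (IsHornMatrix.inf (treeA_conj L₀ (vr L₀ ((Fin.last (n + 2)).castSucc))).isHornMatrix
      (IsHornMatrix.inf (leA_conj L₀ (vr L₀ ((Fin.last n).castSucc.castSucc.castSucc)) (vr L₀ ((Fin.last (n + 2)).castSucc))).isHornMatrix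
        (IsHornMatrix.inf hθ1 (IsHornMatrix.inf hθ2 hθ3))))
  obtain ⟨σ, hσ, hs⟩ := exists_horn_sentence_fa_ex_fa (k := n + 2) hθ
  refine ⟨σ, hσ, fun M iM => ?_⟩
  rw [hs M iM]
  simp only [hr M iM, hr1 M iM, hr2 M iM, hr3 M iM, List.forall_mem_cons,
    List.forall_mem_singleton, List.forall_mem_map, List.mem_finRange, List.forall_mem_nil,
    true_implies, and_imp, Term.realize_func, realize_treeA, realize_ppA, realize_leA,
    realize_rA, realize_vr, realize_rootT, realize_fT, realize_phiA,
    BoundedFormula.realize_inf, forall_snoc_iff, forall_fin0_iff, Fin.snoc_castSucc,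
    Fin.snoc_last, Function.comp, Function.comp_def, BoundedFormula.realize_rel,
    List.not_mem_nil, false_implies, forall_const, implies_true, true_and, and_true]

lemma ax_j {n : ℕ} (φ : ConjAt L₀ n) :
    ∃ σ : (LRSP L₀).Sentence, IsHornSentence σ ∧
      ∀ (M : Type) (iM : (LRSP L₀).Structure M), σ.Realize M ↔
        ∀ (av : Fin n → M) (t b₀ : M), ∃ b : M, ∀ s₁ b₁ : M,
          mTree L₀ t → mP L₀ b₀ → mRealize L₀ φ b₀ av → (∀ i, mP L₀ (av i)) →
          (mTree L₀ (mF L₀ φ t av) ∧ (mLe L₀ (mF L₀ φ t av) t ∧ (mP L₀ b ∧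
            (mR L₀ b (mF L₀ φ t av) ∧ (mRealize L₀ φ b av ∧
            (mTree L₀ s₁ → mLe L₀ s₁ t → mP L₀ b₁ → mR L₀ b₁ s₁ →
              mRealize L₀ φ b₁ av → mLe L₀ s₁ (mF L₀ φ t av))))))) := by
  obtain ⟨θm, hθm, hrm⟩ := exists_hornMatrix_listImp
    [treeA L₀ (vr L₀ ((Fin.last (n + 3)).castSucc)), leA L₀ (vr L₀ ((Fin.last (n + 3)).castSucc)) (vr L₀ ((Fin.last n).castSucc.castSucc.castSucc.castSucc)), ppA L₀ (vr L₀ (Fin.last (n + 4))),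
      rA L₀ (vr L₀ (Fin.last (n + 4))) (vr L₀ ((Fin.last (n + 3)).castSucc)), phiA L₀ φ (Fin.last (n + 4)) (fun i : Fin n => i.castSucc.castSucc.castSucc.castSucc.castSucc)]
    (by
      intro H hH
      simp only [List.mem_cons, List.not_mem_nil, or_false] at hH
      rcases hH with rfl | rfl | rfl | rfl | rfl
      exacts [treeA_conj L₀ _, leA_conj L₀ _ _, ppA_conj L₀ _, rA_conj L₀ _ _,
        phiA_conj L₀ _ _ _])
    (leA_conj L₀ (vr L₀ ((Fin.last (n + 3)).castSucc)) (fT L₀ φ ((Fin.last n).castSucc.castSucc.castSucc.castSucc) (fun i : Fin n => i.castSucc.castSucc.castSucc.castSucc.castSucc))).isHornMatrix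
  obtain ⟨θ, hθ, hr⟩ := exists_hornMatrix_listImp
    (treeA L₀ (vr L₀ ((Fin.last n).castSucc.castSucc.castSucc.castSucc)) :: ppA L₀ (vr L₀ ((Fin.last (n + 1)).castSucc.castSucc.castSucc)) :: phiA L₀ φ ((Fin.last (n + 1)).castSucc.castSucc.castSucc) (fun i : Fin n => i.castSucc.castSucc.castSucc.castSucc.castSucc) ::
      (List.finRange n).map (fun i => ppA L₀ (vr L₀ ((fun i : Fin n => i.castSucc.castSucc.castSucc.castSucc.castSucc) i))))
    (by
      intro H hH
      simp only [List.mem_cons, List.mem_map, List.mem_finRange, List.not_mem_nil, or_false,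
        true_and] at hH
      rcases hH with rfl | rfl | rfl | ⟨i, rfl⟩
      exacts [treeA_conj L₀ _, ppA_conj L₀ _, phiA_conj L₀ _ _ _, ppA_conj L₀ _])
    (IsHornMatrix.inf (treeA_conj L₀ (fT L₀ φ ((Fin.last n).castSucc.castSucc.castSucc.castSucc) (fun i : Fin n => i.castSucc.castSucc.castSucc.castSucc.castSucc))).isHornMatrix
      (IsHornMatrix.inf (leA_conj L₀ (fT L₀ φ ((Fin.last n).castSucc.castSucc.castSucc.castSucc) (fun i : Fin n => i.castSucc.castSucc.castSucc.castSucc.castSucc)) (vr L₀ ((Fin.last n).castSucc.castSucc.castSucc.castSucc))).isHornMatrix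
        (IsHornMatrix.inf (ppA_conj L₀ (vr L₀ ((Fin.last (n + 2)).castSucc.castSucc))).isHornMatrix
          (IsHornMatrix.inf (rA_conj L₀ (vr L₀ ((Fin.last (n + 2)).castSucc.castSucc)) (fT L₀ φ ((Fin.last n).castSucc.castSucc.castSucc.castSucc) (fun i : Fin n => i.castSucc.castSucc.castSucc.castSucc.castSucc))).isHornMatrix
            (IsHornMatrix.inf (phiA_conj L₀ φ ((Fin.last (n + 2)).castSucc.castSucc) (fun i : Fin n => i.castSucc.castSucc.castSucc.castSucc.castSucc)).isHornMatrix hθm)))))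
  obtain ⟨σ, hσ, hs⟩ := exists_horn_sentence_fa_ex_fa2 (k := n + 2) hθ
  refine ⟨σ, hσ, fun M iM => ?_⟩
  rw [hs M iM]
  simp only [hr M iM, hrm M iM, List.forall_mem_cons,
    List.forall_mem_singleton, List.forall_mem_map, List.mem_finRange, List.forall_mem_nil,
    true_implies, and_imp, Term.realize_func, realize_treeA, realize_ppA, realize_leA,
    realize_rA, realize_vr, realize_rootT, realize_fT, realize_phiA,
    BoundedFormula.realize_inf, forall_snoc_iff, forall_fin0_iff, Fin.snoc_castSucc,
    Fin.snoc_last, Function.comp, Function.comp_def, BoundedFormula.realize_rel,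
    List.not_mem_nil, false_implies, forall_const, implies_true, true_and, and_true]

end AxiomsIJ
/-- There is a set `T` of Horn sentences of the language of
`τ = τ₀ ∪ {𝒯, ≤_𝒯, R, P, c} ∪ {F_φ : φ ∈ Δ}` such that for every `τ`-structure `M`:
`M ⊨ T` iff `(M,Δ)` is a packaged RSP. -/
theorem exists_horn_axiomatization_of_rsp (L₀ : FirstOrder.Language.{0, 0}) :
    ∃ TS : Set ((LRSP L₀).Sentence),
      (∀ σ ∈ TS, IsHornSentence σ) ∧
      ∀ (M : Type) (iM : (LRSP L₀).Structure M),
        @Language.Theory.Model (LRSP L₀) M iM TS ↔ @PackagedRSP L₀ M iM := by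
  classical
  refine ⟨{σ | IsHornSentence σ ∧ ∀ (M : Type) (iM : (LRSP L₀).Structure M),
      @PackagedRSP L₀ M iM → @Language.Sentence.Realize (LRSP L₀) M iM σ},
    fun σ hσ => hσ.1, fun M iM => ⟨fun hM => ?_, fun h => ⟨fun σ hσ => hσ.2 M iM h⟩⟩⟩
  refine ⟨?_, ?_, ?_, ?_, ?_, ?_, ?_, ?_, ?_, ?_, ?_, ?_, ?_⟩
  · -- P closed under functions
    intro n f
    obtain ⟨σ, hσ, hiff⟩ := ax_pfun L₀ f
    exact (hiff M iM).mp (hM.realize_of_mem σ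
      ⟨hσ, fun M' iM' h' => (hiff M' iM').mpr (h'.1 n f)⟩)
  · -- relations only among P
    intro n r x hx i
    obtain ⟨σ, hσ, hiff⟩ := ax_prel L₀ r i
    exact (hiff M iM).mp (hM.realize_of_mem σ
      ⟨hσ, fun M' iM' h' => (hiff M' iM').mpr (fun x hx => h'.2.1 n r x hx i)⟩) x hx
  · obtain ⟨σ, hσ, hiff⟩ := ax_le_tree L₀
    exact (hiff M iM).mp (hM.realize_of_mem σ
      ⟨hσ, fun M' iM' h' => (hiff M' iM').mpr h'.2.2.1⟩)
  · obtain ⟨σ, hσ, hiff⟩ := ax_refl L₀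
    exact (hiff M iM).mp (hM.realize_of_mem σ
      ⟨hσ, fun M' iM' h' => (hiff M' iM').mpr h'.2.2.2.1⟩)
  · obtain ⟨σ, hσ, hiff⟩ := ax_trans L₀
    exact (hiff M iM).mp (hM.realize_of_mem σ
      ⟨hσ, fun M' iM' h' => (hiff M' iM').mpr h'.2.2.2.2.1⟩)
  · obtain ⟨σ, hσ, hiff⟩ := ax_root_tree L₀
    exact (hiff M iM).mp (hM.realize_of_mem σ
      ⟨hσ, fun M' iM' h' => (hiff M' iM').mpr h'.2.2.2.2.2.1⟩)
  · obtain ⟨σ, hσ, hiff⟩ := ax_root_le L₀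
    exact (hiff M iM).mp (hM.realize_of_mem σ
      ⟨hσ, fun M' iM' h' => (hiff M' iM').mpr h'.2.2.2.2.2.2.1⟩)
  · obtain ⟨σ, hσ, hiff⟩ := ax_r_sub L₀
    exact (hiff M iM).mp (hM.realize_of_mem σ
      ⟨hσ, fun M' iM' h' => (hiff M' iM').mpr h'.2.2.2.2.2.2.2.1⟩)
  · obtain ⟨σ, hσ, hiff⟩ := ax_f L₀
    exact (hiff M iM).mp (hM.realize_of_mem σ
      ⟨hσ, fun M' iM' h' => (hiff M' iM').mpr h'.2.2.2.2.2.2.2.2.1⟩)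
  · obtain ⟨σ, hσ, hiff⟩ := ax_g L₀
    exact (hiff M iM).mp (hM.realize_of_mem σ
      ⟨hσ, fun M' iM' h' => (hiff M' iM').mpr h'.2.2.2.2.2.2.2.2.2.1⟩)
  · -- clause (h)
    obtain ⟨σ, hσ, hiff⟩ := ax_h L₀
    have s11 := (hiff M iM).mp (hM.realize_of_mem σ
      ⟨hσ, fun M' iM' h' => (hiff M' iM').mpr (fun t => by
        by_cases ht : mTree L₀ t
        · obtain ⟨a, ha⟩ := h'.2.2.2.2.2.2.2.2.2.2.1 t ht
          exact ⟨a, fun _ => ha⟩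
        · exact ⟨mRoot L₀, fun h'' => absurd h'' ht⟩)⟩)
    intro t ht
    obtain ⟨a, ha⟩ := s11 t
    exact ⟨a, ha ht⟩
  · -- clause (i)
    rintro s hs n φ av hav ⟨b₀, hb₀P, hb₀R, hb₀φ⟩
    obtain ⟨σ, hσ, hiff⟩ := ax_i L₀ φ
    have s12 := (hiff M iM).mp (hM.realize_of_mem σ
      ⟨hσ, fun M' iM' h' => (hiff M' iM').mpr (fun av s b₀ => by
        by_cases hc : mTree L₀ s ∧ mP L₀ b₀ ∧ mR L₀ b₀ s ∧ mRealize L₀ φ b₀ av ∧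
          (∀ i, mP L₀ (av i))
        · obtain ⟨h1, h2, h3, h4, h5⟩ := hc
          obtain ⟨t, htT, htle, hiff2⟩ :=
            h'.2.2.2.2.2.2.2.2.2.2.2.1 s h1 n φ av h5 ⟨b₀, h2, h3, h4⟩
          exact ⟨t, fun b hx1 hx2 hx3 hx4 hx5 => ⟨htT, htle,
            fun hbP hbt => ((hiff2 b hbP).mp hbt).1,
            fun hbP hbt => ((hiff2 b hbP).mp hbt).2,
            fun hbP hbs hbφ => (hiff2 b hbP).mpr ⟨hbs, hbφ⟩⟩⟩
        · exact ⟨mRoot L₀, fun b h1 h2 h3 h4 h5 => absurd ⟨h1, h2, h3, h4, h5⟩ hc⟩)⟩)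
    obtain ⟨t, ht⟩ := s12 av s b₀
    have H0 := ht (mRoot L₀) hs hb₀P hb₀R hb₀φ hav
    refine ⟨t, H0.1, H0.2.1, fun b hbP => ?_⟩
    have Hb := ht b hs hb₀P hb₀R hb₀φ hav
    exact ⟨fun hbt => ⟨Hb.2.2.1 hbP hbt, Hb.2.2.2.1 hbP hbt⟩,
      fun hb2 => Hb.2.2.2.2 hbP hb2.1 hb2.2⟩
  · -- clause (j)
    rintro t ht n φ av hav ⟨b₀, hb₀P, hb₀φ⟩
    obtain ⟨σ, hσ, hiff⟩ := ax_j L₀ φ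
    have s13 := (hiff M iM).mp (hM.realize_of_mem σ
      ⟨hσ, fun M' iM' h' => (hiff M' iM').mpr (fun av t b₀ => by
        by_cases hc : mTree L₀ t ∧ mP L₀ b₀ ∧ mRealize L₀ φ b₀ av ∧ (∀ i, mP L₀ (av i))
        · obtain ⟨h1, h2, h3, h4⟩ := hc
          obtain ⟨hF1, hF2, ⟨b, hbP, hbR, hbφ⟩, hmin⟩ :=
            h'.2.2.2.2.2.2.2.2.2.2.2.2 t h1 n φ av h4 ⟨b₀, h2, h3⟩
          exact ⟨b, fun s₁ b₁ hx1 hx2 hx3 hx4 => ⟨hF1, hF2, hbP, hbR, hbφ,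
            fun hs₁ hle hb₁P hb₁R hb₁φ => hmin s₁ hs₁ hle ⟨b₁, hb₁P, hb₁R, hb₁φ⟩⟩⟩
        · exact ⟨mRoot L₀, fun s₁ b₁ h1 h2 h3 h4 => absurd ⟨h1, h2, h3, h4⟩ hc⟩)⟩)
    obtain ⟨b, hb⟩ := s13 av t b₀
    have H0 := hb (mRoot L₀) (mRoot L₀) ht hb₀P hb₀φ hav
    refine ⟨H0.1, H0.2.1, ⟨b, H0.2.2.1, H0.2.2.2.1, H0.2.2.2.2.1⟩, ?_⟩
    rintro s₁ hs₁ hle ⟨b₁, hb₁P, hb₁R, hb₁φ⟩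
    exact (hb s₁ b₁ ht hb₀P hb₀φ hav).2.2.2.2.2 hs₁ hle hb₁P hb₁R hb₁φ


end Shelah1064
end

section
/- Let D be an ultrafilter on a set I, let N be a first-order structure, let μ = ‖N‖ + |τ(N)| (the cardinality of the universe of N plus the cardinality of its vocabulary), and let λ be an infinite cardinal. If the ultrapower (^{ω>}μ, ⊴)^I/D — where ^{ω>}μ is the set of finite sequences from μ and ⊴ is the initial-segment relation — is (λ⁺, atomically)-saturated, then the ultrapower N^I/D is λ⁺-saturated: every set of at most λ first-order formulas in one free variable with parameters from N^I/D which is finitely satisfiable in N^I/D is realized in N^I/D. -/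
open FirstOrder Cardinal

namespace Shelah1064

/-! ### Reduced products of first-order structures with respect to a filter -/

def rpSetoid {I : Type*} (D : Filter I) (M : I → Type*) : Setoid (∀ i, M i) where
  r f g := ∀ᶠ i in D, f i = g i
  iseqv := ⟨fun _ => Filter.Eventually.of_forall fun _ => rfl,
    fun h => h.mono fun _ e => e.symm,
    fun h₁ h₂ => h₂.mp (h₁.mono fun _ e₁ e₂ => e₁.trans e₂)⟩

/-- The reduced product `∏ᵢ Mᵢ / D`. -/
def RedProd {I : Type*} (D : Filter I) (M : I → Type*) : Type _ :=
  Quotient (rpSetoid D M)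

noncomputable instance RedProd.instStructure {I : Type*} {L : Language} (D : Filter I)
    (M : I → Type*) [∀ i, L.Structure (M i)] : L.Structure (RedProd D M) where
  funMap F x := Quotient.mk (rpSetoid D M) fun i =>
    Language.Structure.funMap F fun k => (Quotient.out (s := rpSetoid D M) (x k)) i
  RelMap r x := ∀ᶠ i in D,
    Language.Structure.RelMap r fun k => (Quotient.out (s := rpSetoid D M) (x k)) i

/-- The reduced power `M^I/D`. -/
abbrev RedPow {I : Type*} (D : Filter I) (M : Type*) : Type _ := RedProd D fun _ : I => M

/-- The lift of a binary relation to the reduced product: it holds of two classes iff it holds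
`D`-eventually of representatives. -/
def rpLiftRel {I : Type*} (D : Filter I) {M : I → Type*} (r : ∀ i, M i → M i → Prop)
    (x y : RedProd D M) : Prop :=
  ∀ᶠ i in D, r i (Quotient.out (s := rpSetoid D M) x i) (Quotient.out (s := rpSetoid D M) y i)

/-- The tree `^{ω>}X` of finite sequences from `X`, ordered by the initial-segment
relation `⊴`. -/
def PrefOrd (X : Type*) : Type _ := List X

instance (X : Type*) : LE (PrefOrd X) := ⟨fun a b => List.IsPrefix a b⟩

instance (X : Type*) : FirstOrder.Language.order.Structure (PrefOrd X) :=
  Language.orderStructure _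

/-! ### Auxiliary: basic lemmas about reduced products -/

open FirstOrder.Language Filter

section Los

variable {L : FirstOrder.Language.{0,0}} {I : Type} (D : Ultrafilter I) {M : I → Type}

/-- Abbreviation for the quotient map. -/
abbrev qmk (f : ∀ i, M i) : RedProd (D : Filter I) M :=
  Quotient.mk (rpSetoid (D : Filter I) M) f

lemma out_qmk (f : ∀ i, M i) : ∀ᶠ i in (D : Filter I), (qmk D f).out i = f i :=
  Quotient.exact (Quotient.out_eq (qmk D f))

lemma qmk_out (x : RedProd (D : Filter I) M) : qmk D x.out = x := Quotient.out_eq x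

variable [∀ i, L.Structure (M i)]

lemma funMap_qmk {n : ℕ} (F : L.Functions n) (f : Fin n → ∀ i, M i) :
    Structure.funMap (M := RedProd (D : Filter I) M) F (fun k => qmk D (f k)) =
      qmk D (fun i => Structure.funMap F fun k => f k i) := by
  apply Quotient.sound
  have h : ∀ᶠ i in (D : Filter I), ∀ k, (qmk D (f k)).out i = f k i :=
    Filter.eventually_all.2 fun k => out_qmk D (f k)
  exact h.mono fun i hi => by
    show Structure.funMap F (fun k => (qmk D (f k)).out i) = _
    rw [show (fun k => (qmk D (f k)).out i) = fun k => f k i from funext hi]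

lemma relMap_qmk {n : ℕ} (R : L.Relations n) (f : Fin n → ∀ i, M i) :
    Structure.RelMap (M := RedProd (D : Filter I) M) R (fun k => qmk D (f k)) ↔
      ∀ᶠ i in (D : Filter I), Structure.RelMap R fun k => f k i := by
  have h : ∀ᶠ i in (D : Filter I), ∀ k, (qmk D (f k)).out i = f k i :=
    Filter.eventually_all.2 fun k => out_qmk D (f k)
  refine Filter.eventually_congr (h.mono fun i hi => ?_)
  rw [show (fun k => (qmk D (f k)).out i) = fun k => f k i from funext hi]

lemma term_qmk {β : Type*} (t : L.Term β) (f : β → ∀ i, M i) :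
    (t.realize (M := RedProd (D : Filter I) M) fun s => qmk D (f s)) =
      qmk D (fun i => t.realize fun s => f s i) := by
  induction t with
  | var s => rfl
  | func F ts ih =>
    show Structure.funMap F (fun k => (ts k).realize _) = _
    rw [show (fun k => (ts k).realize (M := RedProd (D : Filter I) M) fun s => qmk D (f s)) =
      fun k => qmk D (fun i => (ts k).realize fun s => f s i) from funext ih, funMap_qmk]
    rfl

lemma snoc_qmk {n : ℕ} (g : Fin n → ∀ i, M i) (m : ∀ i, M i) :
    (Fin.snoc (fun k => qmk D (g k)) (qmk D m) : Fin (n+1) → RedProd (D : Filter I) M) =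
      fun k => qmk D ((Fin.snoc g m : Fin (n+1) → ∀ i, M i) k) := by
  funext k
  refine Fin.lastCases ?_ (fun j => ?_) k <;> simp [Fin.snoc_castSucc, Fin.snoc_last]

lemma snoc_apply {n : ℕ} (g : Fin n → ∀ i, M i) (m : ∀ i, M i) (i : I) :
    (Fin.snoc (fun k => g k i) (m i) : Fin (n+1) → M i) =
      fun k => (Fin.snoc g m : Fin (n+1) → ∀ i, M i) k i := by
  funext k
  refine Fin.lastCases ?_ (fun j => ?_) k <;> simp [Fin.snoc_castSucc, Fin.snoc_last]

variable [∀ i, Nonempty (M i)]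

theorem los {β : Type*} {n : ℕ} (φ : L.BoundedFormula β n) (f : β → ∀ i, M i)
    (g : Fin n → ∀ i, M i) :
    (φ.Realize (M := RedProd (D : Filter I) M) (fun s => qmk D (f s)) (fun k => qmk D (g k))) ↔
      ∀ᶠ i in (D : Filter I), φ.Realize (fun s => f s i) (fun k => g k i) := by
  classical
  induction φ with
  | falsum =>
    simp only [BoundedFormula.Realize]
    exact iff_of_false id (by
      rw [Filter.eventually_false_iff_eq_bot]
      exact D.neBot.ne)
  | @equal n t₁ t₂ =>
    have he : (Sum.elim (fun s => qmk D (f s)) (fun k => qmk D (g k)) :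
        β ⊕ Fin n → RedProd (D : Filter I) M) = fun s => qmk D (Sum.elim f g s) :=
      funext fun s => by cases s <;> rfl
    have he' : ∀ i, (Sum.elim (fun s => f s i) (fun k => g k i) : β ⊕ Fin n → M i) =
        fun s => Sum.elim f g s i := fun i => funext fun s => by cases s <;> rfl
    simp only [BoundedFormula.Realize, he, he', term_qmk]
    exact ⟨fun h => Quotient.exact h, fun h => Quotient.sound h⟩
  | @rel n m R ts =>
    have he : (Sum.elim (fun s => qmk D (f s)) (fun k => qmk D (g k)) :
        β ⊕ Fin n → RedProd (D : Filter I) M) = fun s => qmk D (Sum.elim f g s) :=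
      funext fun s => by cases s <;> rfl
    have he' : ∀ i, (Sum.elim (fun s => f s i) (fun k => g k i) : β ⊕ Fin n → M i) =
        fun s => Sum.elim f g s i := fun i => funext fun s => by cases s <;> rfl
    simp only [BoundedFormula.Realize, he, he']
    rw [show (fun k => (ts k).realize (M := RedProd (D : Filter I) M)
        (fun s => qmk D (Sum.elim f g s))) =
      fun k => qmk D (fun i => (ts k).realize fun s => Sum.elim f g s i) from
        funext fun k => term_qmk D (ts k) _]
    exact relMap_qmk D R _
  | @imp n φ ψ ih1 ih2 =>
    simp only [BoundedFormula.realize_imp, ih1, ih2]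
    exact (Ultrafilter.eventually_imp).symm
  | @all n φ ih =>
    simp only [BoundedFormula.realize_all]
    constructor
    · intro h
      by_contra hc
      rw [← Ultrafilter.eventually_not] at hc
      simp only [not_forall] at hc
      set m : ∀ i, M i := fun i =>
        if hi : ∃ m : M i, ¬φ.Realize (fun s => f s i) (Fin.snoc (fun k => g k i) m)
          then hi.choose else Classical.arbitrary (M i) with hm
      have hspec : ∀ᶠ i in (D : Filter I),
          ¬φ.Realize (fun s => f s i) (Fin.snoc (fun k => g k i) (m i)) := by
        refine hc.mono fun i hi => ?_
        rw [hm]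
        simp only [dif_pos hi]
        exact hi.choose_spec
      have hreal := h (qmk D m)
      rw [snoc_qmk D g m, ih (Fin.snoc g m)] at hreal
      obtain ⟨i, h1, h2⟩ := (hreal.and hspec).exists
      rw [snoc_apply] at h2
      exact h2 h1
    · intro h x
      obtain ⟨m, rfl⟩ : ∃ m : ∀ i, M i, qmk D m = x := ⟨x.out, qmk_out D x⟩
      rw [snoc_qmk D g m, ih (Fin.snoc g m)]
      refine h.mono fun i hi => ?_
      have h2 := hi (m i)
      rwa [snoc_apply] at h2

theorem los_formula {β : Type*} (φ : L.Formula β) (f : β → ∀ i, M i) :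
    (φ.Realize (M := RedProd (D : Filter I) M) fun s => qmk D (f s)) ↔
      ∀ᶠ i in (D : Filter I), φ.Realize fun s => f s i := by
  unfold Formula.Realize
  rw [show (default : Fin 0 → RedProd (D : Filter I) M) =
    fun k => qmk D ((fun k' : Fin 0 => Fin.elim0 k') k) from Subsingleton.elim _ _,
    los D φ f]
  exact Filter.eventually_congr (Filter.Eventually.of_forall fun i =>
    iff_of_eq (congrArg _ (Subsingleton.elim _ _)))

end Los
/-! ### Auxiliary: the tree reduced power -/

section Tree

variable {I : Type} (D : Ultrafilter I) {X : Type}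

/-- Explicit identity conversion `PrefOrd X → List X`. -/
def toL {X : Type} (l : PrefOrd X) : List X := l

/-- Explicit identity conversion `List X → PrefOrd X`. -/
def toP {X : Type} (l : List X) : PrefOrd X := l

/-- Tree reduced power elements of `RedPow D (PrefOrd X)`, prefix relation `D`-a.e. -/
def tle (a b : RedPow (D : Filter I) (PrefOrd X)) : Prop :=
  ∀ᶠ i in (D : Filter I), toL (a.out i) <+: toL (b.out i)

lemma tle_refl (a : RedPow (D : Filter I) (PrefOrd X)) : tle D a a :=
  Filter.Eventually.of_forall fun _ => List.prefix_refl _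

lemma tle_trans {a b c : RedPow (D : Filter I) (PrefOrd X)} (h1 : tle D a b) (h2 : tle D b c) :
    tle D a c :=
  (h1.and h2).mono fun _ h => h.1.trans h.2

/-- The root of the tree reduced power. -/
def troot : RedPow (D : Filter I) (PrefOrd X) := qmk D fun _ => toP ([] : List X)

lemma tle_troot (a : RedPow (D : Filter I) (PrefOrd X)) : tle D (troot D) a := by
  show ∀ᶠ i in (D : Filter I),
    toL ((qmk D fun _ => toP ([] : List X)).out i) <+: toL (a.out i)
  exact (out_qmk D _).mono fun i hi => by rw [hi]; exact List.nil_prefix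

lemma relMap_le_iff (a b : RedPow (D : Filter I) (PrefOrd X)) :
    Structure.RelMap (L := Language.order)
      (IsOrdered.leSymb (L := Language.order)) ![a, b] ↔ tle D a b :=
  Iff.rfl

/-- `param ≤ x` as a formula instance shape. -/
noncomputable def phiGe : Language.order.Formula (Fin 1 ⊕ Fin 1) :=
  Language.Term.le (Language.var (Sum.inl (Sum.inr 0))) (Language.var (Sum.inl (Sum.inl 0)))

/-- `x ≤ param` as a formula instance shape. -/
noncomputable def phiLe : Language.order.Formula (Fin 1 ⊕ Fin 1) :=
  Language.Term.le (Language.var (Sum.inl (Sum.inl 0))) (Language.var (Sum.inl (Sum.inr 0)))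

lemma phiGe_isAtomic : (phiGe).IsAtomic := BoundedFormula.IsAtomic.rel _ _

lemma phiLe_isAtomic : (phiLe).IsAtomic := BoundedFormula.IsAtomic.rel _ _

lemma realize_phiGe (c : RedPow (D : Filter I) (PrefOrd X))
    (x : Fin 1 → RedPow (D : Filter I) (PrefOrd X)) :
    RealizesInst x (⟨1, phiGe, fun _ => c⟩ : FmlInst Language.order 1 _) ↔ tle D c (x 0) := by
  have h : RealizesInst x (⟨1, phiGe, fun _ => c⟩ : FmlInst Language.order 1 _) ↔
      Structure.RelMap (IsOrdered.leSymb (L := Language.order)) ![c, x 0] := by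
    simp only [RealizesInst, phiGe, Language.Term.le, Language.Formula.Realize, BoundedFormula.realize_rel₂,
      Language.Term.realize_var, Sum.elim_inl, Sum.elim_inr]
  rw [h]
  exact relMap_le_iff D c (x 0)

lemma realize_phiLe (c : RedPow (D : Filter I) (PrefOrd X))
    (x : Fin 1 → RedPow (D : Filter I) (PrefOrd X)) :
    RealizesInst x (⟨1, phiLe, fun _ => c⟩ : FmlInst Language.order 1 _) ↔ tle D (x 0) c := by
  have h : RealizesInst x (⟨1, phiLe, fun _ => c⟩ : FmlInst Language.order 1 _) ↔
      Structure.RelMap (IsOrdered.leSymb (L := Language.order)) ![x 0, c] := by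
    simp only [RealizesInst, phiLe, Language.Term.le, Language.Formula.Realize, BoundedFormula.realize_rel₂,
      Language.Term.realize_var, Sum.elim_inl, Sum.elim_inr]
  rw [h]
  exact relMap_le_iff D (x 0) c

/-- The key consequence of atomic saturation of the tree reduced power:
any `≤ lam`-indexed family of elements `a j` (lower bounds) and `b k` (upper bounds)
which is finitely satisfiable has a simultaneous realization. -/
theorem exists_tle {lam : Cardinal} (hlam : ℵ₀ ≤ lam)
    (hsat : AtomSaturated (L := Language.order) (Order.succ lam)
      (RedPow (D : Filter I) (PrefOrd X)))
    {J K : Type} (hJ : #J ≤ lam) (hK : #K ≤ lam)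
    (a : J → RedPow (D : Filter I) (PrefOrd X)) (b : K → RedPow (D : Filter I) (PrefOrd X))
    (hfs : ∀ (s : Finset J) (s' : Finset K), ∃ y,
      (∀ j ∈ s, tle D (a j) y) ∧ ∀ k ∈ s', tle D y (b k)) :
    ∃ y, (∀ j, tle D (a j) y) ∧ ∀ k, tle D y (b k) := by
  classical
  set F : J ⊕ K → FmlInst Language.order 1 (RedPow (D : Filter I) (PrefOrd X)) :=
    fun z => Sum.elim (fun j => ⟨1, phiGe, fun _ => a j⟩)
      (fun k => ⟨1, phiLe, fun _ => b k⟩) z with hF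
  have hΔ : ∀ q ∈ Set.range F,
      (⟨q.1, q.2.1⟩ : Σ m : ℕ, Language.order.Formula (Fin 1 ⊕ Fin m)) ∈
        {q : Σ m : ℕ, Language.order.Formula (Fin 1 ⊕ Fin m) | q.2.IsAtomic} := by
    rintro q ⟨z, rfl⟩
    cases z with
    | inl j => exact phiGe_isAtomic
    | inr k => exact phiLe_isAtomic
  have hcard : #(Set.range F) < Order.succ lam := by
    refine lt_of_le_of_lt (le_trans Cardinal.mk_range_le ?_) (Order.lt_succ lam)
    rw [Cardinal.mk_sum, Cardinal.lift_id, Cardinal.lift_id]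
    calc #J + #K ≤ lam + lam := add_le_add hJ hK
    _ = lam := Cardinal.add_eq_self hlam
  have hfinsat : ∀ s ⊆ Set.range F, s.Finite →
      ∃ x : Fin 1 → RedPow (D : Filter I) (PrefOrd X), ∀ q ∈ s, RealizesInst x q := by
    intro s hs hsfin
    have hchoice : ∀ q ∈ s, ∃ z, F z = q := fun q hq => hs hq
    set G : s → J ⊕ K := fun q => (hchoice q.1 q.2).choose with hG
    have hGspec : ∀ q : s, F (G q) = q.1 := fun q => (hchoice q.1 q.2).choose_spec
    haveI : Finite s := hsfin
    haveI : Fintype s := Fintype.ofFinite _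
    set u : Finset (J ⊕ K) := Finset.univ.image G with hu
    obtain ⟨y, hy1, hy2⟩ := hfs u.toLeft u.toRight
    refine ⟨fun _ => y, fun q hq => ?_⟩
    have hGq := hGspec ⟨q, hq⟩
    cases hz : G ⟨q, hq⟩ with
    | inl j =>
      rw [hz] at hGq
      have hGq' : F (Sum.inl j) = q := hGq
      rw [← hGq', show F (Sum.inl j) = ⟨1, phiGe, fun _ => a j⟩ from rfl, realize_phiGe]
      exact hy1 j (by
        rw [Finset.mem_toLeft]
        exact Finset.mem_image.2 ⟨⟨q, hq⟩, Finset.mem_univ _, hz⟩)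
    | inr k =>
      rw [hz] at hGq
      have hGq' : F (Sum.inr k) = q := hGq
      rw [← hGq', show F (Sum.inr k) = ⟨1, phiLe, fun _ => b k⟩ from rfl, realize_phiLe]
      exact hy2 k (by
        rw [Finset.mem_toRight]
        exact Finset.mem_image.2 ⟨⟨q, hq⟩, Finset.mem_univ _, hz⟩)
  obtain ⟨x, hx⟩ := hsat (Set.range F) hΔ hcard hfinsat
  refine ⟨x 0, fun j => ?_, fun k => ?_⟩
  · have h := hx (F (Sum.inl j)) (Set.mem_range_self _)
    rwa [show F (Sum.inl j) = ⟨1, phiGe, fun _ => a j⟩ from rfl, realize_phiGe] at h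
  · have h := hx (F (Sum.inr k)) (Set.mem_range_self _)
    rwa [show F (Sum.inr k) = ⟨1, phiLe, fun _ => b k⟩ from rfl, realize_phiLe] at h

end Tree
/-! ### The core combinatorial construction -/

section Core

variable {I : Type} (D : Ultrafilter I) {X : Type} {Inst : Type} (e : Inst ↪ X)
  (Sat : Set Inst → Prop) {P : Type} [DecidableEq P] (ψ : P → I → Inst) (E : Ordinal.{0} → P)

/-- The set of instances `ψ γ i` for `γ ∈ v`. -/
def psiSet (v : Finset P) (i : I) : Set Inst := {q | ∃ γ ∈ v, q = ψ γ i}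

/-- The set of instances coded by entries of a node. -/
def decode (l : List X) : Set Inst := {q | e q ∈ l}

lemma decode_nil : decode e ([] : List X) = ∅ := by
  ext q; simp [decode]

lemma decode_append (l : List X) (q0 : Inst) :
    decode e (l ++ [e q0]) = decode e l ∪ {q0} := by
  ext q
  simp only [decode, Set.mem_setOf_eq, List.mem_append, List.mem_singleton,
    Set.mem_union, Set.mem_singleton_iff, e.injective.eq_iff]

lemma decode_mono {l l' : List X} (h : l <+: l') : decode e l ⊆ decode e l' :=
  fun q hq => h.subset hq

lemma psiSet_insert (γ : P) (v : Finset P) (i : I) :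
    psiSet ψ (insert γ v) i = {ψ γ i} ∪ psiSet ψ v i := by
  ext q
  simp only [psiSet, Set.mem_setOf_eq, Finset.mem_insert, Set.mem_union,
    Set.mem_singleton_iff]
  constructor
  · rintro ⟨δ, hδ | hδ, rfl⟩
    · exact Or.inl (by rw [hδ])
    · exact Or.inr ⟨δ, hδ, rfl⟩
  · rintro (rfl | ⟨δ, hδ, rfl⟩)
    · exact ⟨γ, Or.inl rfl, rfl⟩
    · exact ⟨δ, Or.inr hδ, rfl⟩

/-- A node is `v`-good at `i` if its decoded instances together with the `ψ`-instances
from `v` are jointly satisfiable. -/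
def GoodP (v : Finset P) (i : I) (l : List X) : Prop :=
  Sat (decode e l ∪ psiSet ψ v i)

/-- Longest `v`-good prefix of a node. -/
noncomputable def lgp (v : Finset P) (i : I) (l : List X) : List X :=
  l.take (@Nat.findGreatest (fun n => GoodP e Sat ψ v i (l.take n))
    (fun _ => Classical.propDecidable _) l.length)

lemma good_mono (hSat : ∀ A B : Set Inst, A ⊆ B → Sat B → Sat A)
    {v : Finset P} {i : I} {l l' : List X} (h : l' <+: l)
    (hg : GoodP e Sat ψ v i l) : GoodP e Sat ψ v i l' :=
  hSat _ _ (Set.union_subset_union_left _ (decode_mono e h)) hg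

lemma prefix_lgp {v : Finset P} {i : I} {l' L : List X} (hpre : l' <+: L)
    (hgood : GoodP e Sat ψ v i l') : l' <+: lgp e Sat ψ v i L := by
  have hl : l' = L.take l'.length := List.prefix_iff_eq_take.1 hpre
  have hlen : l'.length ≤ L.length := hpre.length_le
  have hP : GoodP e Sat ψ v i (L.take l'.length) := by rw [← hl]; exact hgood
  have hle : l'.length ≤ @Nat.findGreatest (fun n => GoodP e Sat ψ v i (L.take n))
      (fun _ => Classical.propDecidable _) L.length :=
    @Nat.le_findGreatest l'.length (fun n => GoodP e Sat ψ v i (L.take n))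
      (fun _ => Classical.propDecidable _) L.length hlen hP
  rw [hl, lgp]
  exact List.take_prefix_take_left hle

lemma lgp_good {v : Finset P} {i : I} {L : List X} (h0 : GoodP e Sat ψ v i []) :
    GoodP e Sat ψ v i (lgp e Sat ψ v i L) := by
  have h0x : GoodP e Sat ψ v i (L.take 0) := by rw [List.take_zero]; exact h0
  exact @Nat.findGreatest_spec 0 (fun n => GoodP e Sat ψ v i (L.take n))
    (fun _ => Classical.propDecidable _) L.length (Nat.zero_le _) h0x

lemma lgp_prefix {v : Finset P} {i : I} {L : List X} : lgp e Sat ψ v i L <+: L :=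
  List.take_prefix _ _

/-- Truncation of `g` to longest good prefixes. -/
noncomputable def Pv (g : RedPow (D : Filter I) (PrefOrd X)) (v : Finset P) :
    RedPow (D : Filter I) (PrefOrd X) :=
  qmk D fun i => toP (lgp e Sat ψ v i (toL (g.out i)))

/-- Append the record of `γ` to a node. -/
noncomputable def appRec (t : RedPow (D : Filter I) (PrefOrd X)) (γ : P) :
    RedPow (D : Filter I) (PrefOrd X) :=
  qmk D fun i => toP (toL (t.out i) ++ [e (ψ γ i)])

lemma appRec_out (t : RedPow (D : Filter I) (PrefOrd X)) (γ : P) :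
    ∀ᶠ i in (D : Filter I),
      toL ((appRec D e ψ t γ).out i) = toL (t.out i) ++ [e (ψ γ i)] :=
  (out_qmk D _).mono fun i hi => congrArg toL hi

lemma Pv_out (g : RedPow (D : Filter I) (PrefOrd X)) (v : Finset P) :
    ∀ᶠ i in (D : Filter I),
      toL ((Pv D e Sat ψ g v).out i) = lgp e Sat ψ v i (toL (g.out i)) :=
  (out_qmk D _).mono fun i hi => congrArg toL hi

lemma tle_appRec (t : RedPow (D : Filter I) (PrefOrd X)) (γ : P) :
    tle D t (appRec D e ψ t γ) :=
  (appRec_out D e ψ t γ).mono fun i hi => by rw [hi]; exact List.prefix_append _ _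

open Classical in
/-- One step of the transfinite construction. -/
noncomputable def stepF (α : Ordinal.{0})
    (prev : ∀ β, β < α → RedPow (D : Filter I) (PrefOrd X)) :
    RedPow (D : Filter I) (PrefOrd X) :=
  if h1 : ∃ y, ∀ β (hβ : β < α), tle D (appRec D e ψ (prev β hβ) (E β)) y then
    if h2 : ∃ y, (∀ β (hβ : β < α), tle D (appRec D e ψ (prev β hβ) (E β)) y) ∧
        ∀ v : Finset P, tle D y (Pv D e Sat ψ (Classical.choose h1) v) then
      Classical.choose h2
    else Classical.choose h1
  else troot D

/-- The transfinite sequence of approximations. -/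
noncomputable def seqA : Ordinal.{0} → RedPow (D : Filter I) (PrefOrd X) :=
  Ordinal.lt_wf.fix (stepF D e Sat ψ E)

lemma seqA_eq (α : Ordinal.{0}) :
    seqA D e Sat ψ E α = stepF D e Sat ψ E α (fun β _ => seqA D e Sat ψ E β) :=
  Ordinal.lt_wf.fix_eq _ α

theorem seqA_inv {lam : Cardinal} (hlam : ℵ₀ ≤ lam)
    (hsat : AtomSaturated (L := Language.order) (Order.succ lam)
      (RedPow (D : Filter I) (PrefOrd X)))
    (hSat : ∀ A B : Set Inst, A ⊆ B → Sat B → Sat A)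
    (hFP : #(Finset P) ≤ lam)
    (H : ∀ v : Finset P, ∀ᶠ i in (D : Filter I), Sat (psiSet ψ v i))
    (o : Ordinal.{0}) (ho : o.card ≤ lam) :
    ∀ α, α ≤ o →
      (∀ v : Finset P, ∀ᶠ i in (D : Filter I),
        GoodP e Sat ψ v i (toL ((seqA D e Sat ψ E α).out i))) ∧
      (∀ β, β < α → tle D (appRec D e ψ (seqA D e Sat ψ E β) (E β)) (seqA D e Sat ψ E α)) := by
  intro α
  induction α using Ordinal.induction with
  | _ α IH =>
  intro hα
  set A := seqA D e Sat ψ E with hA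
  set bf : Ordinal → RedPow (D : Filter I) (PrefOrd X) := fun β => appRec D e ψ (A β) (E β)
    with hbf
  set ι := Ordinal.ToType.mk (o := α) with hι
  set af : α.ToType → RedPow (D : Filter I) (PrefOrd X) := fun j => bf (ι.symm j).1 with haf
  -- cardinality of the index type
  have hJ : #α.ToType ≤ lam := by
    rw [Cardinal.mk_toType]
    exact le_trans (Ordinal.card_le_card hα) ho
  -- the lower family is a chain
  have achain : ∀ (s : Finset α.ToType), s.Nonempty →
      ∃ jm : α.ToType, ∀ j ∈ s, tle D (af j) (af jm) := by
    intro s hs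
    refine ⟨s.max' hs, fun j hj => ?_⟩
    rcases eq_or_lt_of_le (s.le_max' j hj) with hle | hlt
    · rw [hle]; exact tle_refl D _
    · have hjm : (ι.symm j).1 < (ι.symm (s.max' hs)).1 := by
        have := ι.symm.lt_iff_lt.2 hlt
        exact this
      have hmlt : (ι.symm (s.max' hs)).1 < α := (ι.symm (s.max' hs)).2
      have hIH := IH (ι.symm (s.max' hs)).1 hmlt (le_of_lt (lt_of_lt_of_le hmlt hα))
      exact tle_trans D (hIH.2 (ι.symm j).1 hjm) (tle_appRec D e ψ _ _)
  -- existence of an upper bound of the chain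
  have h1 : ∃ y, ∀ β (hβ : β < α), tle D (appRec D e ψ (A β) (E β)) y := by
    have hfs : ∀ (s : Finset α.ToType) (s' : Finset Empty),
        ∃ y, (∀ j ∈ s, tle D (af j) y) ∧ ∀ k ∈ s', tle D y (Empty.elim k) := by
      intro s _
      rcases s.eq_empty_or_nonempty with hs | hs
      · exact ⟨troot D, by simp [hs], fun k _ => k.elim⟩
      · obtain ⟨jm, hjm⟩ := achain s hs
        exact ⟨af jm, hjm, fun k _ => k.elim⟩
    obtain ⟨y, hy1, _⟩ := exists_tle D hlam hsat hJ
      (le_trans (le_of_eq (Cardinal.mk_eq_zero Empty)) zero_le)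
      af (fun k => Empty.elim k) hfs
    refine ⟨y, fun β hβ => ?_⟩
    have h := hy1 (ι ⟨β, hβ⟩)
    simp only [haf] at h
    rw [ι.symm_apply_apply] at h
    exact h
  set g := Classical.choose h1 with hg
  have hgspec : ∀ β (hβ : β < α), tle D (bf β) g := Classical.choose_spec h1
  -- the second saturation call
  have hbPart : ∀ (βm : Ordinal) (hβm : βm < α) (v : Finset P),
      tle D (bf βm) (Pv D e Sat ψ g v) := by
    intro βm hβm v
    have hIH := IH βm hβm (le_of_lt (lt_of_lt_of_le hβm hα))
    have h3 := hIH.1 (insert (E βm) v)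
    have h4 := appRec_out D e ψ (A βm) (E βm)
    have h5 : tle D (bf βm) g := hgspec βm hβm
    have h6 := Pv_out D e Sat ψ g v
    show ∀ᶠ i in (D : Filter I),
      toL ((bf βm).out i) <+: toL ((Pv D e Sat ψ g v).out i)
    refine ((h3.and (h4.and (h5.and h6)))).mono fun i hi => ?_
    obtain ⟨hi3, hi4, hi5, hi6⟩ := hi
    rw [hi6, hi4]
    refine prefix_lgp e Sat ψ ?_ ?_
    · rw [← hi4]; exact hi5
    · show Sat _
      rw [decode_append]
      have hi3x : Sat (decode e (toL ((A βm).out i)) ∪ psiSet ψ (insert (E βm) v) i) := hi3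
      rw [psiSet_insert] at hi3x
      exact hSat _ _ (Set.union_assoc _ _ _).subset hi3x
  have h2 : ∃ y, (∀ β (hβ : β < α), tle D (appRec D e ψ (A β) (E β)) y) ∧
      ∀ v : Finset P, tle D y (Pv D e Sat ψ (Classical.choose h1) v) := by
    have hfs : ∀ (s : Finset α.ToType) (s' : Finset (Finset P)),
        ∃ y, (∀ j ∈ s, tle D (af j) y) ∧
          ∀ v ∈ s', tle D y (Pv D e Sat ψ g v) := by
      intro s s'
      rcases s.eq_empty_or_nonempty with hs | hs
      · exact ⟨troot D, by simp [hs], fun v _ => tle_troot D _⟩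
      · obtain ⟨jm, hjm⟩ := achain s hs
        exact ⟨af jm, hjm, fun v _ => hbPart (ι.symm jm).1 (ι.symm jm).2 v⟩
    obtain ⟨y, hy1, hy2⟩ := exists_tle D hlam hsat hJ hFP
      af (fun v => Pv D e Sat ψ g v) hfs
    refine ⟨y, fun β hβ => ?_, hy2⟩
    have h := hy1 (ι ⟨β, hβ⟩)
    simp only [haf] at h
    rw [ι.symm_apply_apply] at h
    exact h
  have hstep : A α = Classical.choose h2 := by
    have e1 : A α = stepF D e Sat ψ E α (fun β _ => A β) := seqA_eq D e Sat ψ E α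
    rw [e1]
    unfold stepF
    rw [dif_pos h1, dif_pos h2]
  have hspec2 := Classical.choose_spec h2
  constructor
  · intro v
    have hy : tle D (A α) (Pv D e Sat ψ g v) := by
      rw [hstep]; exact hspec2.2 v
    have h0 : ∀ᶠ i in (D : Filter I), GoodP e Sat ψ v i ([] : List X) :=
      (H v).mono fun i hi => by
        show Sat _
        rw [decode_nil, Set.empty_union]
        exact hi
    refine ((hy.and (h0.and (Pv_out D e Sat ψ g v)))).mono fun i hi => ?_
    obtain ⟨hi1, hi2, hi3⟩ := hi
    rw [hi3] at hi1
    exact good_mono e Sat ψ hSat hi1 (lgp_good e Sat ψ hi2)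
  · intro β hβ
    rw [hstep]
    exact hspec2.1 β hβ

include e in
theorem core_main {lam : Cardinal} (hlam : ℵ₀ ≤ lam)
    (hsat : AtomSaturated (L := Language.order) (Order.succ lam)
      (RedPow (D : Filter I) (PrefOrd X)))
    (hSat : ∀ A B : Set Inst, A ⊆ B → Sat B → Sat A)
    (hP : #P ≤ lam) (hFP : #(Finset P) ≤ lam)
    (H : ∀ v : Finset P, ∀ᶠ i in (D : Filter I), Sat (psiSet ψ v i)) :
    ∃ w : I → Set Inst, (∀ᶠ i in (D : Filter I), Sat (w i)) ∧
      ∀ γ : P, ∀ᶠ i in (D : Filter I), ψ γ i ∈ w i := by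
  rcases isEmpty_or_nonempty P with hP0 | hP0
  · refine ⟨fun _ => ∅, ?_, fun γ => isEmptyElim γ⟩
    refine (H ∅).mono fun i hi => ?_
    have hps : psiSet ψ (∅ : Finset P) i = (∅ : Set Inst) := by
      ext q
      simp [psiSet]
    rwa [hps] at hi
  · set o := (#P).ord with ho
    have hcard : o.card ≤ lam := by rw [ho, Cardinal.card_ord]; exact hP
    obtain ⟨eqv⟩ : Nonempty (o.ToType ≃ P) :=
      Cardinal.eq.mp (by rw [Cardinal.mk_toType, ho, Cardinal.card_ord])
    set ι := Ordinal.ToType.mk (o := o) with hι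
    set Ef : Ordinal.{0} → P := fun β =>
      if h : β < o then eqv (ι ⟨β, h⟩) else Classical.arbitrary P with hE
    have hsurj : ∀ γ : P, ∃ β, ∃ h : β < o, Ef β = γ := by
      intro γ
      refine ⟨(ι.symm (eqv.symm γ)).1, (ι.symm (eqv.symm γ)).2, ?_⟩
      simp only [hE]
      have hlt : ((ι.symm (eqv.symm γ)) : Ordinal) < o := (ι.symm (eqv.symm γ)).2
      rw [dif_pos hlt]
      have : (⟨(ι.symm (eqv.symm γ)).1, (ι.symm (eqv.symm γ)).2⟩ :
          Set.Iio o) = ι.symm (eqv.symm γ) := rfl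
      rw [this, OrderIso.apply_symm_apply, Equiv.apply_symm_apply]
    have inv := seqA_inv D e Sat ψ Ef hlam hsat hSat hFP H o hcard o le_rfl
    refine ⟨fun i => decode e (toL ((seqA D e Sat ψ Ef o).out i)), ?_, ?_⟩
    · refine (inv.1 ∅).mono fun i hi => ?_
      have hx : Sat (decode e (toL ((seqA D e Sat ψ Ef o).out i)) ∪ psiSet ψ ∅ i) := hi
      have hps : psiSet ψ (∅ : Finset P) i = (∅ : Set Inst) := by
        ext q
        simp [psiSet]
      rwa [hps, Set.union_empty] at hx
    · intro γ
      obtain ⟨β, hβ, hEβ⟩ := hsurj γ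
      have h2 := inv.2 β hβ
      refine ((h2.and (appRec_out D e ψ (seqA D e Sat ψ Ef β) (Ef β)))).mono fun i hi => ?_
      obtain ⟨hi1, hi2⟩ := hi
      show e (ψ γ i) ∈ toL ((seqA D e Sat ψ Ef o).out i)
      apply hi1.subset
      rw [hi2, hEβ]
      exact List.mem_append_right _ (List.mem_singleton_self _)

end Core
/-! ### Assembly -/

section Assembly

variable {L : FirstOrder.Language.{0,0}} {I : Type} (D : Ultrafilter I)

/-- The instance of a formula-with-parameters at coordinate `i`. -/
noncomputable def instAt {N : Type} (q : FmlInst L 1 (RedPow (D : Filter I) N)) (i : I) :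
    FmlInst L 1 N :=
  ⟨q.1, q.2.1, fun k => (q.2.2 k).out i⟩

/-- Satisfiability (by a single element) of a set of instances over `N`. -/
def satN {N : Type} [L.Structure N] (A : Set (FmlInst L 1 N)) : Prop :=
  ∃ c : N, ∀ q ∈ A, RealizesInst (fun _ : Fin 1 => c) q

theorem finite_case (N : Type) [L.Structure N] [Finite N]
    (p : Set (FmlInst L 1 (RedPow (D : Filter I) N)))
    (hfin : ∀ s ⊆ p, s.Finite →
      ∃ x : Fin 1 → RedPow (D : Filter I) N, ∀ q ∈ s, RealizesInst x q) :
    ∃ x : Fin 1 → RedPow (D : Filter I) N, ∀ q ∈ p, RealizesInst x q := by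
  classical
  haveI hNI : Nonempty I := Filter.nonempty_of_neBot (D : Filter I)
  haveI : Finite (RedPow (D : Filter I) N) := by
    rcases isEmpty_or_nonempty N with h0 | h0
    · exact Finite.of_injective
        (fun x : RedPow (D : Filter I) N =>
          (isEmptyElim (x.out (Classical.arbitrary I)) : Fin 0))
        (fun x => isEmptyElim (x.out (Classical.arbitrary I)))
    · have hex : ∀ x : RedPow (D : Filter I) N, ∃ c : N, {i | x.out i = c} ∈ D := by
        intro x
        have hU : (⋃ c ∈ (Set.univ : Set N), {i | x.out i = c}) ∈ D := by
          have hU2 : (⋃ c ∈ (Set.univ : Set N), {i | x.out i = c}) = Set.univ := by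
            ext i
            simp
          rw [hU2]
          exact Filter.univ_mem
        obtain ⟨c, _, hc⟩ := (Ultrafilter.finite_biUnion_mem_iff Set.finite_univ).1 hU
        exact ⟨c, hc⟩
      choose F hF using hex
      refine Finite.of_injective F fun a b hab => ?_
      have h1 : ∀ᶠ i in (D : Filter I), a.out i = F a := hF a
      have h2 : ∀ᶠ i in (D : Filter I), b.out i = F b := hF b
      rw [hab] at h1
      rw [← qmk_out D a, ← qmk_out D b]
      exact Quotient.sound ((h1.and h2).mono fun i hi => hi.1.trans hi.2.symm)
  by_contra hno
  push_neg at hno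
  choose Q hQ1 hQ2 using hno
  obtain ⟨x, hx⟩ := hfin (Set.range Q)
    (by rintro _ ⟨x0, rfl⟩; exact hQ1 x0) (Set.finite_range Q)
  exact hQ2 x (hx (Q x) (Set.mem_range_self x))

end Assembly

/-- If `D` is an ultrafilter on `I`, `N` a structure, `μ = ‖N‖ + |τ(N)|` and the
ultrapower `(^{ω>}μ, ⊴)^I/D` is `(λ⁺, atomically)`-saturated, then `N^I/D` is
`λ⁺`-saturated (for types of first-order formulas in one free variable). -/
theorem ultrapower_saturated_of_tree_saturated {L : FirstOrder.Language.{0, 0}} {I : Type}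
    (D : Ultrafilter I) (N : Type) [L.Structure N] (lam : Cardinal) (hlam : ℵ₀ ≤ lam)
    (hsat : AtomSaturated (L := FirstOrder.Language.order) (Order.succ lam)
      (RedPow (D : Filter I) (PrefOrd ((#N + L.card).ord.ToType)))) :
    TupSaturated (Order.succ lam) 1
      (Set.univ : Set (Σ m : ℕ, L.Formula (Fin 1 ⊕ Fin m))) (RedPow (D : Filter I) N) := by
  classical
  intro p _ hcard hfin
  rcases finite_or_infinite N with hNf | hNi
  · exact finite_case D N p hfin
  · haveI : Nonempty N := inferInstance
    have hμ : ℵ₀ ≤ #N + L.card :=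
      le_trans (Cardinal.infinite_iff.1 hNi) (self_le_add_right _ _)
    -- the number of instances over N is at most μ
    have hFormula : ∀ m : ℕ, #(L.Formula (Fin 1 ⊕ Fin m)) ≤ #N + L.card := by
      intro m
      have h1 : #(L.Formula (Fin 1 ⊕ Fin m)) ≤
          #(Σ n, L.BoundedFormula (Fin 1 ⊕ Fin m) n) :=
        Cardinal.mk_le_of_injective (f := Sigma.mk 0) sigma_mk_injective
      refine h1.trans (FirstOrder.Language.BoundedFormula.card_le.trans ?_)
      rw [Cardinal.lift_id, Cardinal.lift_id]
      refine max_le hμ ?_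
      exact add_le_add_left
        ((Cardinal.mk_le_aleph0).trans (Cardinal.infinite_iff.1 hNi)) _
    have harrow : ∀ m : ℕ, #(Fin m → N) ≤ #N := by
      intro m
      rw [Cardinal.mk_arrow, Cardinal.lift_id, Cardinal.lift_id, Cardinal.mk_fin]
      exact_mod_cast Cardinal.power_nat_le (Cardinal.infinite_iff.1 hNi)
    have hInst : #(FmlInst L 1 N) ≤ #N + L.card := by
      have h1 : #(FmlInst L 1 N) =
          Cardinal.sum fun m : ℕ => #(L.Formula (Fin 1 ⊕ Fin m) × (Fin m → N)) :=
        Cardinal.mk_sigma _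
      rw [h1]
      refine le_trans (Cardinal.sum_le_sum _ (fun _ => #N + L.card) ?_) ?_
      · intro m
        rw [Cardinal.mk_prod, Cardinal.lift_id, Cardinal.lift_id]
        calc #(L.Formula (Fin 1 ⊕ Fin m)) * #(Fin m → N) ≤
            (#N + L.card) * (#N + L.card) :=
              mul_le_mul' (hFormula m) ((harrow m).trans (self_le_add_right _ _))
          _ = #N + L.card := Cardinal.mul_eq_self hμ
      · rw [Cardinal.sum_const', Cardinal.mk_nat,
          Cardinal.mul_eq_max le_rfl hμ, max_eq_right hμ]
    obtain ⟨e⟩ : Nonempty (FmlInst L 1 N ↪ (#N + L.card).ord.ToType) :=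
      (Cardinal.le_def _ _).1 (hInst.trans (Cardinal.mk_ord_toType (#N + L.card)).symm.le)
    have hSatMono : ∀ A B : Set (FmlInst L 1 N), A ⊆ B → satN B → satN A :=
      fun A B hAB h => h.elim fun c hc => ⟨c, fun q hq => hc q (hAB hq)⟩
    have hPle : #↑p ≤ lam := Order.lt_succ_iff.1 hcard
    have hFP : #(Finset ↑p) ≤ lam := by
      rcases finite_or_infinite ↑p with hf | hin
      · exact le_trans Cardinal.mk_le_aleph0 hlam
      · rw [Cardinal.mk_finset_of_infinite]
        exact hPle
    -- the coordinatewise instances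
    have H : ∀ v : Finset ↑p, ∀ᶠ i in (D : Filter I),
        satN (psiSet (fun (γ : ↑p) (i : I) => instAt D γ.1 i) v i) := by
      intro v
      obtain ⟨x, hx⟩ := hfin (Subtype.val '' ↑v)
        (by rintro _ ⟨q, _, rfl⟩; exact q.2) ((v.finite_toSet).image _)
      have hx' : ∀ γ : ↑p, γ ∈ v → ∀ᶠ i in (D : Filter I),
          (γ.1.2.1).Realize (fun s => Sum.elim (fun _ : Fin 1 => (x 0).out)
            (fun k => ((γ.1.2.2 k).out : I → N)) s i) := by
        intro γ hγ
        have hq : RealizesInst x γ.1 := hx γ.1 ⟨γ, hγ, rfl⟩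
        have hval : (fun s => qmk D ((Sum.elim (fun _ : Fin 1 => (x 0).out)
            (fun k => ((γ.1.2.2 k).out : I → N))) s)) = Sum.elim x γ.1.2.2 := by
          funext s
          cases s with
          | inl j =>
            have hj : x j = x 0 := congrArg x (Subsingleton.elim j 0)
            show qmk D ((x 0).out) = x j
            rw [hj]
            exact qmk_out D (x 0)
          | inr k => exact qmk_out D _
        exact (los_formula D γ.1.2.1 _).1 (by rw [hval]; exact hq)
      have hall := (Filter.eventually_all_finset v).2 hx'
      refine hall.mono fun i hi => ⟨(x 0).out i, ?_⟩
      rintro q' ⟨γ, hγ, rfl⟩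
      show (γ.1.2.1).Realize (Sum.elim (fun _ : Fin 1 => (x 0).out i)
        (fun k => (γ.1.2.2 k).out i))
      have hvi : (Sum.elim (fun _ : Fin 1 => (x 0).out i) (fun k => (γ.1.2.2 k).out i) :
          (Fin 1 ⊕ Fin γ.1.1) → N) = fun s => Sum.elim (fun _ : Fin 1 => (x 0).out)
            (fun k => ((γ.1.2.2 k).out : I → N)) s i := by
        funext s
        cases s <;> rfl
      rw [hvi]
      exact hi γ hγ
    obtain ⟨w, hw1, hw2⟩ := core_main D e satN
      (fun (γ : ↑p) (i : I) => instAt D γ.1 i) hlam hsat hSatMono hPle hFP H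
    obtain ⟨cfun, hcfun⟩ : ∃ c : I → N, ∀ i, satN (w i) →
        ∀ q ∈ w i, RealizesInst (fun _ : Fin 1 => c i) q := by
      refine ⟨fun i => if h : satN (w i) then h.choose else Classical.arbitrary N,
        fun i hSi => ?_⟩
      simp only [dif_pos hSi]
      exact hSi.choose_spec
    refine ⟨fun _ => qmk D cfun, fun q hq => ?_⟩
    show q.2.1.Realize (Sum.elim (fun _ : Fin 1 => qmk D cfun) q.2.2)
    have hval : (fun s => qmk D ((Sum.elim (fun _ : Fin 1 => cfun)
        (fun k => ((q.2.2 k).out : I → N))) s)) =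
        Sum.elim (fun _ : Fin 1 => qmk D cfun) q.2.2 := by
      funext s
      cases s with
      | inl j => rfl
      | inr k => exact qmk_out D _
    rw [← hval, los_formula D q.2.1 _]
    refine ((hw1.and (hw2 ⟨q, hq⟩))).mono fun i hi => ?_
    obtain ⟨hi1, hi2⟩ := hi
    have hreal := hcfun i hi1 _ hi2
    have hvi : (Sum.elim (fun _ : Fin 1 => cfun i) (fun k => (q.2.2 k).out i) :
        (Fin 1 ⊕ Fin q.1) → N) = fun s => Sum.elim (fun _ : Fin 1 => cfun)
          (fun k => ((q.2.2 k).out : I → N)) s i := by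
      funext s
      cases s <;> rfl
    show q.2.1.Realize (fun s => Sum.elim (fun _ : Fin 1 => cfun)
      (fun k => ((q.2.2 k).out : I → N)) s i)
    rw [← hvi]
    exact hreal

end Shelah1064
end
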